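/- arXiv:2110.07764 — 2 statements merged into one kernel-verified Lean document; each statement's English description precedes it below -/
import Mathlib

section
/- Let G be a 3-connected multigraph, let u, v, w be three pairwise adjacent vertices of G each of which has at least four distinct neighbours in G, and let G' be obtained from G by a Δ-YY transformation on u, v, w. Then G' is 3-connected. -/
open scoped Classical

noncomputable section

/-- A multigraph: a finite vertex type together with a symmetric multiplicity
function recording the size of the connection (set of parallel edges) between
any two vertices; there are no loops. -/
structure MG : Type 1 where
  V : Type
  fin : Fintype V
  mult : V → V → ℕ
  symm : ∀ u v, mult u v = mult v u
  loopless : ∀ v, mult v v = 0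

namespace MG

/-- Two vertices are adjacent when their connection is non-empty. -/
def Adj (G : MG) (u v : G.V) : Prop := 0 < G.mult u v

/-- Connection size as a function on unordered pairs of vertices. -/
def multS (G : MG) : Sym2 G.V → ℕ := Sym2.lift ⟨G.mult, G.symm⟩

/-- Number of vertices. -/
def order (G : MG) : ℕ := @Fintype.card G.V G.fin

/-- Degree of a vertex, counting edges with multiplicity. -/
def deg (G : MG) (v : G.V) : ℕ :=
  haveI := G.fin
  ∑ u, G.mult v u

/-- `G` is `k`-regular. -/
def Regular (G : MG) (k : ℕ) : Prop := ∀ v, G.deg v = k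

/-- A simple graph: every connection has size at most 1. -/
def Simple (G : MG) : Prop := ∀ u v, G.mult u v ≤ 1

/-- Isomorphism of multigraphs. -/
def Iso (G H : MG) : Prop :=
  ∃ e : G.V ≃ H.V, ∀ u v, H.mult (e u) (e v) = G.mult u v

/-- Indicator: is `{a,b}` one of the three pairs `{u,v}, {u,w}, {v,w}`? -/
def triCount {V : Type} (u v w a b : V) : ℕ :=
  if s(a, b) ∈ ({s(u, v), s(u, w), s(v, w)} : Set (Sym2 V)) then 1 else 0

lemma triCount_symm {V : Type} (u v w a b : V) :
    triCount u v w a b = triCount u v w b a := by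
  unfold triCount
  have h : s(a, b) = s(b, a) := Sym2.eq_swap
  rw [h]

/-- `u, v, w` form a delta (triangle): pairwise distinct and pairwise adjacent. -/
def IsDelta (G : MG) (u v w : G.V) : Prop :=
  u ≠ v ∧ u ≠ w ∧ v ≠ w ∧ G.Adj u v ∧ G.Adj u w ∧ G.Adj v w

/-- `x` is the centre of a wye with external vertices `u, v, w`: the edges
incident to `x` are exactly two parallel edges to each of `u, v, w`. -/
def IsWye (G : MG) (x u v w : G.V) : Prop :=
  u ≠ v ∧ u ≠ w ∧ v ≠ w ∧ x ≠ u ∧ x ≠ v ∧ x ≠ w ∧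
    G.mult x u = 2 ∧ G.mult x v = 2 ∧ G.mult x w = 2 ∧
    ∀ y : G.V, y ≠ u → y ≠ v → y ≠ w → G.mult x y = 0

/-- Multiplicity function of the result of a Δ-YY transformation on the
delta `u, v, w`; the new vertex `x` is `none`. -/
def deltaMult (G : MG) (u v w : G.V) : Option G.V → Option G.V → ℕ
  | none, none => 0
  | none, some b => if b = u ∨ b = v ∨ b = w then 2 else 0
  | some a, none => if a = u ∨ a = v ∨ a = w then 2 else 0
  | some a, some b => G.mult a b - triCount u v w a b

/-- The result of the Δ-YY transformation on the delta `u, v, w`: one edge of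
each of the connections `uv`, `uw`, `vw` is removed, a new vertex (`none`) is
added, joined by two parallel edges to each of `u, v, w`. -/
def deltaYY (G : MG) (u v w : G.V) : MG where
  V := Option G.V
  fin := by haveI := G.fin; infer_instance
  mult := G.deltaMult u v w
  symm := by
    rintro (_ | a) (_ | b)
    · rfl
    · rfl
    · rfl
    · show G.mult a b - triCount u v w a b = G.mult b a - triCount u v w b a
      rw [G.symm a b, triCount_symm]
  loopless := by
    rintro (_ | a)
    · rfl
    · show G.mult a a - triCount u v w a a = 0
      rw [G.loopless]
      exact Nat.zero_sub _

/-- The result of the YY-Δ transformation on a wye with centre `x` and external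
vertices `u, v, w`: the vertex `x` is deleted together with all its incident
edges, and one new edge is added to each of the connections `uv`, `uw`, `vw`. -/
def yyDelta (G : MG) (x u v w : G.V) : MG where
  V := {y : G.V // y ≠ x}
  fin := by haveI := G.fin; infer_instance
  mult a b := if a = b then 0 else G.mult a.1 b.1 + triCount u v w a.1 b.1
  symm := by
    intro a b
    rcases eq_or_ne a b with h | h
    · subst h; rfl
    · rw [if_neg h, if_neg h.symm, G.symm a.1 b.1, triCount_symm]
  loopless := fun a => if_pos rfl

/-- `G'` is obtained from `G` by a Δ-YY transformation. -/
def DeltaYYStep (G G' : MG) : Prop :=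
  ∃ u v w : G.V, G.IsDelta u v w ∧ Iso (G.deltaYY u v w) G'

/-- `G'` is obtained from `G` by a YY-Δ transformation. -/
def YYDeltaStep (G G' : MG) : Prop :=
  ∃ x u v w : G.V, G.IsWye x u v w ∧ Iso (G.yyDelta x u v w) G'

/-- `G'` is obtained from `G` by a Δ-YY operation (either a Δ-YY transformation
or a YY-Δ transformation). -/
def Step (G G' : MG) : Prop := DeltaYYStep G G' ∨ YYDeltaStep G G'

/-- Δ-YY equivalence: `G` can be transformed into `H`, up to isomorphism, by a
finite sequence of Δ-YY operations. -/
def DYYEquiv : MG → MG → Prop :=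
  Relation.EqvGen (fun G G' => Step G G' ∨ Iso G G')

/-- The Δ-YY equivalence class of `G` contains only finitely many isomorphism
classes of multigraphs. -/
def FiniteClass (G : MG) : Prop :=
  ∃ S : Finset MG, ∀ H : MG, DYYEquiv G H → ∃ H' ∈ S, Iso H H'

/-- Connectivity: nonempty, and any two vertices are joined by a path. -/
def Connected (G : MG) : Prop :=
  Nonempty G.V ∧ ∀ u v : G.V, Relation.ReflTransGen G.Adj u v

/-- The multigraph obtained by deleting a set of vertices (and all edges
incident to them). -/
def deleteVerts (G : MG) (S : Set G.V) : MG where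
  V := {y : G.V // y ∉ S}
  fin := by haveI := G.fin; infer_instance
  mult a b := G.mult a.1 b.1
  symm := fun a b => G.symm a.1 b.1
  loopless := fun a => G.loopless a.1

/-- `G` is `k`-connected: it has more than `k` vertices and deleting any set of
fewer than `k` vertices leaves a connected multigraph. -/
def KConnected (G : MG) (k : ℕ) : Prop :=
  k < G.order ∧ ∀ S : Set G.V, S.ncard < k → (G.deleteVerts S).Connected

/-- `G` is planar: it has a drawing in the plane in which vertices are distinct
points, every edge (each parallel edge separately) is a continuous injective
arc joining the points of its endpoints, no arc passes through a vertex point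
in its interior, and the interiors of the arcs of distinct edges are disjoint.
The arc of the `k`-th edge from `v` to `u` is the reverse of the arc of the
`k`-th edge from `u` to `v` (they are the same edge drawn once). -/
def IsPlanar (G : MG) : Prop :=
  ∃ (pos : G.V → ℝ × ℝ) (γ : G.V → G.V → ℕ → C(unitInterval, ℝ × ℝ)),
    Function.Injective pos ∧
    (∀ u v k, k < G.mult u v →
      γ u v k 0 = pos u ∧ γ u v k 1 = pos v ∧ Function.Injective (γ u v k)) ∧
    (∀ u v k (t : unitInterval), γ v u k t = γ u v k (unitInterval.symm t)) ∧
    (∀ u v k, k < G.mult u v → ∀ t : unitInterval, t ≠ 0 → t ≠ 1 →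
      ∀ z : G.V, γ u v k t ≠ pos z) ∧
    (∀ u v k u' v' k', k < G.mult u v → k' < G.mult u' v' →
      (s(u, v) ≠ s(u', v') ∨ k ≠ k') →
      ∀ t t' : unitInterval, t ≠ 0 → t ≠ 1 → t' ≠ 0 → t' ≠ 1 →
        γ u v k t ≠ γ u' v' k' t')

/-- An independent set: no two of its vertices are adjacent. -/
def IsIndepSet (G : MG) (S : Set G.V) : Prop :=
  ∀ u ∈ S, ∀ v ∈ S, ¬ G.Adj u v

/-- The independence number `α(G)`: the maximum size of an independent set. -/
def indepNum (G : MG) : ℕ :=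
  sSup {n | ∃ S : Set G.V, G.IsIndepSet S ∧ S.ncard = n}

/-- The number of non-empty connections, i.e. the number of edges of the
simplification `G^S`. -/
def numConn (G : MG) : ℕ := {p : Sym2 G.V | G.multS p ≠ 0}.ncard

/-- The cyclomatic number `m - n + 1` of the simplification `G^S` of `G`. -/
def cyclomaticS (G : MG) : ℤ := (G.numConn : ℤ) - (G.order : ℤ) + 1

/-- `AddOnAt G a S` : the vertex set `S` of `G` carries (a subgraph copy of) an
add-on whose addition vertex is `a`.  An add-on of length 0 is a double edge or
a delta; an add-on of length `n ≥ 1` is a 4-cycle `a b c d` with the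
connections `ab`, `ad` of size 1 and `bc`, `cd` of size 2, glued at `c` to an
add-on of length `n - 1`. -/
inductive AddOnAt (G : MG) : G.V → Set G.V → Prop
  | double (a b : G.V) : a ≠ b → 2 ≤ G.mult a b → AddOnAt G a {a, b}
  | delta (a b c : G.V) : a ≠ b → a ≠ c → b ≠ c →
      1 ≤ G.mult a b → 1 ≤ G.mult a c → 1 ≤ G.mult b c → AddOnAt G a {a, b, c}
  | link (a b c d : G.V) (S : Set G.V) :
      a ≠ b → a ≠ c → a ≠ d → b ≠ c → b ≠ d → c ≠ d →
      1 ≤ G.mult a b → 1 ≤ G.mult a d → 2 ≤ G.mult b c → 2 ≤ G.mult c d →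
      AddOnAt G c S → S ∩ {a, b, d} = ∅ → AddOnAt G a ({a, b, d} ∪ S)

/-- `G` contains one of the four families of excluded subgraphs. -/
def HasExcluded (G : MG) : Prop :=
  -- (1) a 3-cycle in which at least one connection has size at least 2
  (∃ a b c : G.V, a ≠ b ∧ a ≠ c ∧ b ≠ c ∧
      2 ≤ G.mult a b ∧ 1 ≤ G.mult a c ∧ 1 ≤ G.mult b c) ∨
  -- (2) a 4-cycle with at least three connections of size at least 2 and an
  -- add-on glued at a vertex incident to two of them
  (∃ a b c d : G.V, ∃ S : Set G.V,
      a ≠ b ∧ a ≠ c ∧ a ≠ d ∧ b ≠ c ∧ b ≠ d ∧ c ≠ d ∧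
      2 ≤ G.mult a b ∧ 2 ≤ G.mult b c ∧ 2 ≤ G.mult c d ∧ 1 ≤ G.mult d a ∧
      AddOnAt G b S ∧ S ∩ {a, c, d} = ∅) ∨
  -- (3) a 5-cycle with all connections of size at least 2 and add-ons glued at
  -- two non-adjacent vertices of the cycle
  (∃ v₀ v₁ v₂ v₃ v₄ : G.V, ∃ S T : Set G.V,
      v₀ ≠ v₁ ∧ v₀ ≠ v₂ ∧ v₀ ≠ v₃ ∧ v₀ ≠ v₄ ∧ v₁ ≠ v₂ ∧ v₁ ≠ v₃ ∧ v₁ ≠ v₄ ∧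
      v₂ ≠ v₃ ∧ v₂ ≠ v₄ ∧ v₃ ≠ v₄ ∧
      2 ≤ G.mult v₀ v₁ ∧ 2 ≤ G.mult v₁ v₂ ∧ 2 ≤ G.mult v₂ v₃ ∧
      2 ≤ G.mult v₃ v₄ ∧ 2 ≤ G.mult v₄ v₀ ∧
      AddOnAt G v₀ S ∧ AddOnAt G v₂ T ∧
      S ∩ {v₁, v₂, v₃, v₄} = ∅ ∧ T ∩ {v₀, v₁, v₃, v₄} = ∅ ∧ S ∩ T = ∅) ∨
  -- (4) a 4-cycle with three connections of size at least 2, whose fourth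
  -- connection has size 1 and lies in a triangle, with add-ons glued at both
  -- vertices of that connection
  (∃ a b c d e : G.V, ∃ S T : Set G.V,
      a ≠ b ∧ a ≠ c ∧ a ≠ d ∧ a ≠ e ∧ b ≠ c ∧ b ≠ d ∧ b ≠ e ∧
      c ≠ d ∧ c ≠ e ∧ d ≠ e ∧
      2 ≤ G.mult a b ∧ 2 ≤ G.mult b c ∧ 2 ≤ G.mult c d ∧ G.mult d a = 1 ∧
      1 ≤ G.mult d e ∧ 1 ≤ G.mult e a ∧
      AddOnAt G a S ∧ AddOnAt G d T ∧
      S ∩ {b, c, d, e} = ∅ ∧ T ∩ {a, b, c, e} = ∅ ∧ S ∩ T = ∅)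

/-- The doubling of a simple graph: every edge is replaced by a connection of
size 2. -/
def doubling {V : Type} [Fintype V] (H : SimpleGraph V) : MG where
  V := V
  fin := inferInstance
  mult u v := if H.Adj u v then 2 else 0
  symm := by
    intro u v
    by_cases h : H.Adj u v
    · rw [if_pos h, if_pos h.symm]
    · rw [if_neg h, if_neg fun h' => h h'.symm]
  loopless := fun v => if_neg (H.loopless.irrefl v)

end MG

end

section Aux

open MG

private lemma rtg_lift' {α β : Type*} (f : α → β) {s : α → α → Prop} {t : β → β → Prop}
    (h : ∀ x y, s x y → Relation.ReflTransGen t (f x) (f y)) {a b : α}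
    (hab : Relation.ReflTransGen s a b) :
    Relation.ReflTransGen t (f a) (f b) := by
  induction hab with
  | refl => exact Relation.ReflTransGen.refl
  | tail _ hstep ih => exact ih.trans (h _ _ hstep)

private lemma rtg_imp' {α : Type*} {s : α → α → Prop} {P : α → Prop}
    (h : ∀ x y, s x y → P x → P y) {a b : α}
    (hab : Relation.ReflTransGen s a b) (ha : P a) : P b := by
  induction hab with
  | refl => exact ha
  | tail _ st ih => exact h _ _ st ih

private lemma triCount_le_one' {V : Type} (u v w a b : V) :
    MG.triCount u v w a b ≤ 1 := by
  unfold MG.triCount; split <;> omega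

private lemma tri_pos' {V : Type} {u v w a b : V}
    (h : 0 < MG.triCount u v w a b) :
    (a = u ∧ b = v) ∨ (a = v ∧ b = u) ∨ (a = u ∧ b = w) ∨ (a = w ∧ b = u) ∨
      (a = v ∧ b = w) ∨ (a = w ∧ b = v) := by
  unfold MG.triCount at h
  split at h
  · next hmem =>
      simp only [Set.mem_insert_iff, Set.mem_singleton_iff, Sym2.eq_iff] at hmem
      tauto
  · omega

private lemma live_of_nontri {G : MG} {u v w a b : G.V} (hadj : G.Adj a b)
    (h : ¬ ((a = u ∧ b = v) ∨ (a = v ∧ b = u) ∨ (a = u ∧ b = w) ∨ (a = w ∧ b = u) ∨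
      (a = v ∧ b = w) ∨ (a = w ∧ b = v))) :
    0 < G.deltaMult u v w (some a) (some b) := by
  have h1 : MG.triCount u v w a b = 0 := by
    by_contra h2
    exact h (tri_pos' (Nat.pos_of_ne_zero h2))
  show 0 < G.mult a b - MG.triCount u v w a b
  rw [h1, Nat.sub_zero]
  exact hadj

private lemma dead' {G : MG} {u v w a b : G.V} (hadj : G.Adj a b)
    (h : ¬ 0 < G.deltaMult u v w (some a) (some b)) :
    (a = u ∧ b = v) ∨ (a = v ∧ b = u) ∨ (a = u ∧ b = w) ∨ (a = w ∧ b = u) ∨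
      (a = v ∧ b = w) ∨ (a = w ∧ b = v) := by
  by_contra hc
  exact h (live_of_nontri hadj hc)

private def Rel' (G : MG) (u v w : G.V) (S : Set (Option G.V))
    (a b : Option G.V) : Prop :=
  a ∉ S ∧ b ∉ S ∧ 0 < G.deltaMult u v w a b

private def Con' (G : MG) (u v w : G.V) (S : Set (Option G.V)) :
    Option G.V → Option G.V → Prop :=
  Relation.ReflTransGen (Rel' G u v w S)

private lemma rel_symm' (G : MG) (u v w : G.V) (S : Set (Option G.V)) :
    Symmetric (Rel' G u v w S) := by
  rintro a b ⟨ha, hb, hm⟩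
  refine ⟨hb, ha, ?_⟩
  have := (G.deltaYY u v w).symm a b
  have h2 : G.deltaMult u v w a b = G.deltaMult u v w b a := this
  omega

private lemma con_symm' {G : MG} {u v w : G.V} {S : Set (Option G.V)}
    {a b : Option G.V} (h : Con' G u v w S a b) : Con' G u v w S b a :=
  by
    haveI : Std.Symm (Rel' G u v w S) := ⟨fun a b hab => rel_symm' G u v w S hab⟩
    exact (Relation.ReflTransGen.stdSymm (r := Rel' G u v w S)).symm _ _ h

private lemma con_of_perm' {G : MG} {u v w u' v' w' : G.V}
    (h : G.deltaMult u v w = G.deltaMult u' v' w') {S : Set (Option G.V)}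
    {a b : Option G.V} (hc : Con' G u' v' w' S a b) : Con' G u v w S a b := by
  have he : Rel' G u v w S = Rel' G u' v' w' S := by
    funext x y; unfold Rel'; rw [h]
  unfold Con'
  rw [he]
  exact hc

private lemma deltaMult_perm' (G : MG) (u v w u' v' w' : G.V)
    (h1 : ∀ a b : G.V, MG.triCount u v w a b = MG.triCount u' v' w' a b)
    (h2 : ∀ b : G.V, (b = u ∨ b = v ∨ b = w) ↔ (b = u' ∨ b = v' ∨ b = w')) :
    G.deltaMult u v w = G.deltaMult u' v' w' := by
  funext a b
  match a, b with
  | none, none => rfl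
  | none, some b =>
      show (if b = u ∨ b = v ∨ b = w then 2 else 0) =
        (if b = u' ∨ b = v' ∨ b = w' then 2 else 0)
      rw [if_congr (h2 b) rfl rfl]
  | some a, none =>
      show (if a = u ∨ a = v ∨ a = w then 2 else 0) =
        (if a = u' ∨ a = v' ∨ a = w' then 2 else 0)
      rw [if_congr (h2 a) rfl rfl]
  | some a, some b =>
      show G.mult a b - MG.triCount u v w a b = G.mult a b - MG.triCount u' v' w' a b
      rw [h1]

private lemma triCount_uwv {V : Type} (u v w a b : V) :
    MG.triCount u v w a b = MG.triCount u w v a b := by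
  unfold MG.triCount
  have h : (s(a,b) ∈ ({s(u,v), s(u,w), s(v,w)} : Set (Sym2 V))) ↔
      (s(a,b) ∈ ({s(u,w), s(u,v), s(w,v)} : Set (Sym2 V))) := by
    simp only [Set.mem_insert_iff, Set.mem_singleton_iff,
      show s(w,v) = s(v,w) from Sym2.eq_swap]
    tauto
  rw [if_congr h rfl rfl]

private lemma triCount_vwu {V : Type} (u v w a b : V) :
    MG.triCount u v w a b = MG.triCount v w u a b := by
  unfold MG.triCount
  have h : (s(a,b) ∈ ({s(u,v), s(u,w), s(v,w)} : Set (Sym2 V))) ↔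
      (s(a,b) ∈ ({s(v,w), s(v,u), s(w,u)} : Set (Sym2 V))) := by
    simp only [Set.mem_insert_iff, Set.mem_singleton_iff,
      show s(v,u) = s(u,v) from Sym2.eq_swap,
      show s(w,u) = s(u,w) from Sym2.eq_swap]
    tauto
  rw [if_congr h rfl rfl]

private lemma deltaMult_uwv (G : MG) (u v w : G.V) :
    G.deltaMult u v w = G.deltaMult u w v :=
  deltaMult_perm' G u v w u w v (fun a b => triCount_uwv u v w a b) (fun b => by tauto)

private lemma deltaMult_vwu (G : MG) (u v w : G.V) :
    G.deltaMult u v w = G.deltaMult v w u :=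
  deltaMult_perm' G u v w v w u (fun a b => triCount_vwu u v w a b) (fun b => by tauto)

private lemma exists_nbr' (G : MG) (p : G.V) (hp : 4 ≤ {y : G.V | G.Adj p y}.ncard)
    (E : Set G.V) (hE : E.ncard ≤ 3) : ∃ y, G.Adj p y ∧ y ∉ E ∧ y ≠ p := by
  haveI := G.fin
  by_contra h
  push_neg at h
  have hsub : {y : G.V | G.Adj p y} ⊆ E := by
    intro y hy
    by_contra hyE
    have hyp := h y hy hyE
    subst hyp
    have h0 : 0 < G.mult y y := hy
    have := G.loopless y
    omega
  have := Set.ncard_le_ncard hsub (Set.toFinite E)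
  omega

private lemma S0_small {G : MG} (S : Set (Option G.V)) (hS : S.ncard < 3)
    (hnone : (none : Option G.V) ∈ S) :
    ({c : G.V | some c ∈ S}).ncard ≤ 1 := by
  haveI := G.fin
  set S₀ : Set G.V := {c : G.V | some c ∈ S}
  have himg : (Option.some '' S₀ : Set (Option G.V)) ⊆ S \ {none} := by
    rintro _ ⟨c, hc, rfl⟩
    exact ⟨hc, by simp⟩
  have h1 : (Option.some '' S₀).ncard ≤ (S \ {none}).ncard :=
    Set.ncard_le_ncard himg (Set.toFinite _)
  rw [Set.ncard_image_of_injective _ (Option.some_injective _)] at h1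
  have h2 : (S \ {none}).ncard = S.ncard - 1 :=
    Set.ncard_diff_singleton_of_mem hnone
  omega

private lemma conUV' (G : MG) (hG : G.KConnected 3) (u v w : G.V)
    (huv : u ≠ v) (huw : u ≠ w) (hvw : v ≠ w)
    (hu : 4 ≤ {y : G.V | G.Adj u y}.ncard)
    (hv : 4 ≤ {y : G.V | G.Adj v y}.ncard)
    (S : Set (Option G.V)) (hS : S.ncard < 3) (hnone : (none : Option G.V) ∈ S)
    (hus : (some u : Option G.V) ∉ S) (hvs : (some v : Option G.V) ∉ S) :
    Con' G u v w S (some u) (some v) := by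
  haveI := G.fin
  set S₀ : Set G.V := {c : G.V | some c ∈ S} with hS₀def
  have hS₀ : S₀.ncard ≤ 1 := S0_small S hS hnone
  by_contra hcon
  -- a neighbour of u outside {v, w} ∪ S₀
  obtain ⟨y, hyadj, hyE, hyu⟩ := exists_nbr' G u hu ({v, w} ∪ S₀) (by
    have h1 := Set.ncard_union_le ({v, w} : Set G.V) S₀
    have h2 := Set.ncard_insert_le v ({w} : Set G.V)
    have h3 := Set.ncard_singleton w
    omega)
  have hyv : y ≠ v := fun h => hyE (Or.inl (by simp [h]))
  have hyw : y ≠ w := fun h => hyE (Or.inl (by simp [h]))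
  have hyS : (some y : Option G.V) ∉ S := fun h => hyE (Or.inr h)
  have cuy : Con' G u v w S (some u) (some y) :=
    Relation.ReflTransGen.single ⟨hus, hyS, live_of_nontri hyadj (by
      rintro (⟨h1, h2⟩ | ⟨h1, h2⟩ | ⟨h1, h2⟩ | ⟨h1, h2⟩ | ⟨h1, h2⟩ | ⟨h1, h2⟩)
      · exact hyv h2
      · exact huv h1
      · exact hyw h2
      · exact huw h1
      · exact huv h1
      · exact huw h1)⟩
  by_cases hcvw : Con' G u v w S (some v) (some w)
  · -- delete S₀ ∪ {u}, walk from y to v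
    have hcuw : ¬ Con' G u v w S (some u) (some w) := fun h =>
      hcon (h.trans (con_symm' hcvw))
    have hdel : (S₀ ∪ ({u} : Set G.V)).ncard < 3 := by
      have h1 := Set.ncard_union_le S₀ ({u} : Set G.V)
      have h2 := Set.ncard_singleton u
      omega
    obtain ⟨-, hp⟩ := hG.2 (S₀ ∪ {u}) hdel
    have hy' : y ∉ S₀ ∪ ({u} : Set G.V) := by
      intro h
      rcases h with h | h
      · exact hyE (Or.inr h)
      · exact hyu h
    have hv' : v ∉ S₀ ∪ ({u} : Set G.V) := by
      intro h
      rcases h with h | h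
      · exact hvs h
      · exact huv (Set.mem_singleton_iff.mp h).symm
    have hstepP : ∀ p q : (G.deleteVerts (S₀ ∪ {u})).V,
        (G.deleteVerts (S₀ ∪ {u})).Adj p q →
        Con' G u v w S (some u) (some p.1) → Con' G u v w S (some u) (some q.1) := by
      intro p q hst hcup
      have hpS : (some p.1 : Option G.V) ∉ S := fun h => p.2 (Or.inl h)
      have hqS : (some q.1 : Option G.V) ∉ S := fun h => q.2 (Or.inl h)
      have hpu : p.1 ≠ u := fun h => p.2 (Or.inr h)
      have hqu : q.1 ≠ u := fun h => q.2 (Or.inr h)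
      have hadj : G.Adj p.1 q.1 := hst
      by_cases hlive : 0 < G.deltaMult u v w (some p.1) (some q.1)
      · exact hcup.tail ⟨hpS, hqS, hlive⟩
      · rcases dead' hadj hlive with ⟨h1, h2⟩ | ⟨h1, h2⟩ | ⟨h1, h2⟩ | ⟨h1, h2⟩ |
          ⟨h1, h2⟩ | ⟨h1, h2⟩
        · exact absurd h1 hpu
        · exact absurd h2 hqu
        · exact absurd h1 hpu
        · exact absurd h2 hqu
        · rw [h1] at hcup; exact absurd hcup hcon
        · rw [h1] at hcup; exact absurd hcup hcuw
    exact hcon (rtg_imp' hstepP (hp ⟨y, hy'⟩ ⟨v, hv'⟩) cuy)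
  · -- delete S₀ ∪ {v}, walk from z to u
    obtain ⟨z, hzadj, hzE, hzv⟩ := exists_nbr' G v hv ({u, w} ∪ S₀) (by
      have h1 := Set.ncard_union_le ({u, w} : Set G.V) S₀
      have h2 := Set.ncard_insert_le u ({w} : Set G.V)
      have h3 := Set.ncard_singleton w
      omega)
    have hzu : z ≠ u := fun h => hzE (Or.inl (by simp [h]))
    have hzw : z ≠ w := fun h => hzE (Or.inl (by simp [h]))
    have hzS : (some z : Option G.V) ∉ S := fun h => hzE (Or.inr h)
    have cvz : Con' G u v w S (some v) (some z) :=
      Relation.ReflTransGen.single ⟨hvs, hzS, live_of_nontri hzadj (by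
        rintro (⟨h1, h2⟩ | ⟨h1, h2⟩ | ⟨h1, h2⟩ | ⟨h1, h2⟩ | ⟨h1, h2⟩ | ⟨h1, h2⟩)
        · exact huv h1.symm
        · exact hzu h2
        · exact huv h1.symm
        · exact hzu h2
        · exact hzw h2
        · exact hvw h1)⟩
    have hdel : (S₀ ∪ ({v} : Set G.V)).ncard < 3 := by
      have h1 := Set.ncard_union_le S₀ ({v} : Set G.V)
      have h2 := Set.ncard_singleton v
      omega
    obtain ⟨-, hp⟩ := hG.2 (S₀ ∪ {v}) hdel
    have hz' : z ∉ S₀ ∪ ({v} : Set G.V) := by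
      intro h
      rcases h with h | h
      · exact hzE (Or.inr h)
      · exact hzv h
    have hu' : u ∉ S₀ ∪ ({v} : Set G.V) := by
      intro h
      rcases h with h | h
      · exact hus h
      · exact huv (Set.mem_singleton_iff.mp h)
    have hstepP : ∀ p q : (G.deleteVerts (S₀ ∪ {v})).V,
        (G.deleteVerts (S₀ ∪ {v})).Adj p q →
        Con' G u v w S (some v) (some p.1) → Con' G u v w S (some v) (some q.1) := by
      intro p q hst hcvp
      have hpS : (some p.1 : Option G.V) ∉ S := fun h => p.2 (Or.inl h)
      have hqS : (some q.1 : Option G.V) ∉ S := fun h => q.2 (Or.inl h)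
      have hpv : p.1 ≠ v := fun h => p.2 (Or.inr h)
      have hqv : q.1 ≠ v := fun h => q.2 (Or.inr h)
      have hadj : G.Adj p.1 q.1 := hst
      by_cases hlive : 0 < G.deltaMult u v w (some p.1) (some q.1)
      · exact hcvp.tail ⟨hpS, hqS, hlive⟩
      · rcases dead' hadj hlive with ⟨h1, h2⟩ | ⟨h1, h2⟩ | ⟨h1, h2⟩ | ⟨h1, h2⟩ |
          ⟨h1, h2⟩ | ⟨h1, h2⟩
        · exact absurd h2 hqv
        · exact absurd h1 hpv
        · rw [h1] at hcvp
          exact absurd (con_symm' hcvp) hcon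
        · rw [h1] at hcvp; exact absurd hcvp hcvw
        · exact absurd h1 hpv
        · exact absurd h2 hqv
    have := rtg_imp' hstepP (hp ⟨z, hz'⟩ ⟨u, hu'⟩) cvz
    exact hcon (con_symm' this)

private lemma claimA' (G : MG) (hG : G.KConnected 3) (u v w : G.V)
    (huv : u ≠ v)
    (S : Set (Option G.V)) (hS : S.ncard < 3) (hnone : (none : Option G.V) ∈ S)
    (a : G.V) (haS : (some a : Option G.V) ∉ S) :
    ∃ t : G.V, (t = u ∨ t = v ∨ t = w) ∧ (some t : Option G.V) ∉ S ∧
      Con' G u v w S (some t) (some a) := by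
  haveI := G.fin
  set S₀ : Set G.V := {c : G.V | some c ∈ S} with hS₀def
  have hS₀ : S₀.ncard ≤ 1 := S0_small S hS hnone
  have hbase : ∃ t0 : G.V, (t0 = u ∨ t0 = v ∨ t0 = w) ∧ (some t0 : Option G.V) ∉ S := by
    by_contra h
    push_neg at h
    have hu' : u ∈ S₀ := h u (Or.inl rfl)
    have hv' : v ∈ S₀ := h v (Or.inr (Or.inl rfl))
    have hsub : ({u, v} : Set G.V) ⊆ S₀ := by
      intro c hc
      rcases hc with hc | hc
      · exact hc ▸ hu'
      · exact (Set.mem_singleton_iff.mp hc) ▸ hv'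
    have h2 : ({u, v} : Set G.V).ncard = 2 := Set.ncard_pair huv
    have := Set.ncard_le_ncard hsub (Set.toFinite S₀)
    omega
  obtain ⟨t0, ht0, ht0S⟩ := hbase
  have hdel : S₀.ncard < 3 := by omega
  obtain ⟨-, hp⟩ := hG.2 S₀ hdel
  have hstepP : ∀ p q : (G.deleteVerts S₀).V, (G.deleteVerts S₀).Adj p q →
      (∃ t : G.V, (t = u ∨ t = v ∨ t = w) ∧ (some t : Option G.V) ∉ S ∧
        Con' G u v w S (some t) (some p.1)) →
      (∃ t : G.V, (t = u ∨ t = v ∨ t = w) ∧ (some t : Option G.V) ∉ S ∧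
        Con' G u v w S (some t) (some q.1)) := by
    intro p q hst hex
    have hpS : (some p.1 : Option G.V) ∉ S := p.2
    have hqS : (some q.1 : Option G.V) ∉ S := q.2
    have hadj : G.Adj p.1 q.1 := hst
    by_cases hlive : 0 < G.deltaMult u v w (some p.1) (some q.1)
    · obtain ⟨t, ht, htS, hc⟩ := hex
      exact ⟨t, ht, htS, hc.tail ⟨hpS, hqS, hlive⟩⟩
    · have hq3 : q.1 = u ∨ q.1 = v ∨ q.1 = w := by
        rcases dead' hadj hlive with ⟨h1, h2⟩ | ⟨h1, h2⟩ | ⟨h1, h2⟩ | ⟨h1, h2⟩ |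
          ⟨h1, h2⟩ | ⟨h1, h2⟩ <;> tauto
      exact ⟨q.1, hq3, hqS, Relation.ReflTransGen.refl⟩
  exact rtg_imp' hstepP (hp ⟨t0, ht0S⟩ ⟨a, haS⟩)
    ⟨t0, ht0, ht0S, Relation.ReflTransGen.refl⟩

private lemma con_to_subtype' (G : MG) (u v w : G.V) (S : Set (Option G.V))
    {a b : Option G.V} (h : Con' G u v w S a b) :
    ∀ (ha : a ∉ S) (hb : b ∉ S),
      Relation.ReflTransGen ((G.deltaYY u v w).deleteVerts S).Adj ⟨a, ha⟩ ⟨b, hb⟩ := by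
  induction h with
  | refl => intro ha hb; exact Relation.ReflTransGen.refl
  | tail _ hbc ih =>
      intro ha hc
      exact (ih ha hbc.1).tail hbc.2.2

private lemma deltaYY_kconn (G : MG) (hG : G.KConnected 3) (u v w : G.V)
    (huv : u ≠ v) (huw : u ≠ w) (hvw : v ≠ w)
    (hu : 4 ≤ {y : G.V | G.Adj u y}.ncard)
    (hv : 4 ≤ {y : G.V | G.Adj v y}.ncard)
    (hw : 4 ≤ {y : G.V | G.Adj w y}.ncard) :
    (G.deltaYY u v w).KConnected 3 := by
  haveI := G.fin
  have hord : G.order = Nat.card G.V := by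
    letI := G.fin
    exact Nat.card_eq_fintype_card.symm
  have hcard : (G.deltaYY u v w).order = Nat.card ((G.deltaYY u v w).V) := by
    letI := (G.deltaYY u v w).fin
    exact Nat.card_eq_fintype_card.symm
  have hopt : Nat.card ((G.deltaYY u v w).V) = Nat.card G.V + 1 := by
    letI := G.fin
    show Nat.card (Option G.V) = _
    simp [Nat.card_eq_fintype_card]
  refine ⟨by have := hG.1; omega, ?_⟩
  intro S hS
  have hne : ∃ y0 : Option G.V, y0 ∉ S := by
    by_contra h
    push_neg at h
    have huniv : S = Set.univ := Set.eq_univ_of_forall h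
    rw [huniv, Set.ncard_univ] at hS
    have := hG.1
    omega
  obtain ⟨y0, hy0⟩ := hne
  refine ⟨⟨⟨y0, hy0⟩⟩, ?_⟩
  rintro ⟨a1, ha⟩ ⟨b1, hb⟩
  suffices hcon : Con' G u v w S a1 b1 by
    exact con_to_subtype' G u v w S hcon ha hb
  by_cases hnone : (none : Option G.V) ∈ S
  · -- Case A: the new vertex is deleted
    match a1, ha, b1, hb with
    | none, ha, _, _ => exact absurd hnone ha
    | some a₀, ha, none, hb => exact absurd hnone hb
    | some a₀, ha, some b₀, hb =>
      obtain ⟨ta, hta, htaS, cta⟩ := claimA' G hG u v w huv S hS hnone a₀ ha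
      obtain ⟨tb, htb, htbS, ctb⟩ := claimA' G hG u v w huv S hS hnone b₀ hb
      have bridge : ∀ s t : G.V, (s = u ∨ s = v ∨ s = w) → (t = u ∨ t = v ∨ t = w) →
          (some s : Option G.V) ∉ S → (some t : Option G.V) ∉ S →
          Con' G u v w S (some s) (some t) := by
        have pUV : ∀ (hs : (some u : Option G.V) ∉ S) (ht : (some v : Option G.V) ∉ S),
            Con' G u v w S (some u) (some v) := fun hs ht =>
          conUV' G hG u v w huv huw hvw hu hv S hS hnone hs ht
        have pUW : ∀ (hs : (some u : Option G.V) ∉ S) (ht : (some w : Option G.V) ∉ S),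
            Con' G u v w S (some u) (some w) := fun hs ht =>
          con_of_perm' (deltaMult_uwv G u v w)
            (conUV' G hG u w v huw huv hvw.symm hu hw S hS hnone hs ht)
        have pVW : ∀ (hs : (some v : Option G.V) ∉ S) (ht : (some w : Option G.V) ∉ S),
            Con' G u v w S (some v) (some w) := fun hs ht =>
          con_of_perm' (deltaMult_vwu G u v w)
            (conUV' G hG v w u hvw huv.symm huw.symm hv hw S hS hnone hs ht)
        intro s t hs ht hsS htS
        rcases hs with rfl | rfl | rfl <;> rcases ht with rfl | rfl | rfl
        · exact Relation.ReflTransGen.refl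
        · exact pUV hsS htS
        · exact pUW hsS htS
        · exact con_symm' (pUV htS hsS)
        · exact Relation.ReflTransGen.refl
        · exact pVW hsS htS
        · exact con_symm' (pUW htS hsS)
        · exact con_symm' (pVW htS hsS)
        · exact Relation.ReflTransGen.refl
      exact (con_symm' cta).trans ((bridge ta tb hta htb htaS htbS).trans ctb)
  · -- Case B: the new vertex survives
    set S₀ : Set G.V := {c : G.V | some c ∈ S} with hS₀def
    have hS₀ : S₀.ncard < 3 := by
      have himg : (Option.some '' S₀ : Set (Option G.V)) ⊆ S := by
        rintro _ ⟨c, hc, rfl⟩; exact hc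
      have h1 : (Option.some '' S₀).ncard ≤ S.ncard :=
        Set.ncard_le_ncard himg (Set.toFinite _)
      rw [Set.ncard_image_of_injective _ (Option.some_injective _)] at h1
      omega
    have hbr : ∀ p q : G.V, p ∉ S₀ → q ∉ S₀ → G.Adj p q →
        Con' G u v w S (some p) (some q) := by
      intro p q hp hq hadj
      by_cases hlive : 0 < G.deltaMult u v w (some p) (some q)
      · exact Relation.ReflTransGen.single ⟨hp, hq, hlive⟩
      · have hpat := dead' hadj hlive
        have hp3 : p = u ∨ p = v ∨ p = w := by tauto
        have hq3 : q = u ∨ q = v ∨ q = w := by tauto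
        have s1 : Rel' G u v w S (some p) none := ⟨hp, hnone, by
          show 0 < (if p = u ∨ p = v ∨ p = w then 2 else 0)
          rw [if_pos hp3]; omega⟩
        have s2 : Rel' G u v w S none (some q) := ⟨hnone, hq, by
          show 0 < (if q = u ∨ q = v ∨ q = w then 2 else 0)
          rw [if_pos hq3]; omega⟩
        exact (Relation.ReflTransGen.single s1).tail s2
    have hlift : ∀ p q : G.V, p ∉ S₀ → q ∉ S₀ → Con' G u v w S (some p) (some q) := by
      intro p q hp hq
      obtain ⟨-, hpath⟩ := hG.2 S₀ hS₀
      exact rtg_lift' (fun c : (G.deleteVerts S₀).V => (some c.1 : Option G.V))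
        (fun x y hxy => hbr x.1 y.1 x.2 y.2 hxy) (hpath ⟨p, hp⟩ ⟨q, hq⟩)
    have hxt : ∃ t : G.V, (t = u ∨ t = v ∨ t = w) ∧ t ∉ S₀ := by
      by_contra h
      push_neg at h
      have hsub : ({u, v, w} : Set G.V) ⊆ S₀ := by
        intro c hc
        rcases hc with hc | hc | hc
        · exact hc ▸ h u (Or.inl rfl)
        · exact hc ▸ h v (Or.inr (Or.inl rfl))
        · exact (Set.mem_singleton_iff.mp hc) ▸ h w (Or.inr (Or.inr rfl))
      have h3 : ({u, v, w} : Set G.V).ncard = 3 :=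
        Set.ncard_eq_three.mpr ⟨u, v, w, huv, huw, hvw, rfl⟩
      have := Set.ncard_le_ncard hsub (Set.toFinite S₀)
      omega
    obtain ⟨t, ht3, htS₀⟩ := hxt
    have cxt : Con' G u v w S none (some t) :=
      Relation.ReflTransGen.single ⟨hnone, htS₀, by
        show 0 < (if t = u ∨ t = v ∨ t = w then 2 else 0)
        rw [if_pos ht3]; omega⟩
    match a1, ha, b1, hb with
    | none, ha, none, hb => exact Relation.ReflTransGen.refl
    | none, ha, some b₀, hb => exact cxt.trans (hlift t b₀ htS₀ hb)
    | some a₀, ha, none, hb => exact con_symm' (cxt.trans (hlift t a₀ htS₀ ha))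
    | some a₀, ha, some b₀, hb => exact hlift a₀ b₀ ha hb

private lemma kconn_of_iso {G H : MG} (h : MG.Iso G H) {k : ℕ}
    (hG : G.KConnected k) : H.KConnected k := by
  obtain ⟨e, he⟩ := h
  haveI := G.fin
  haveI := H.fin
  obtain ⟨hord, hconn⟩ := hG
  have hcard : H.order = G.order := by
    have h1 : G.order = Nat.card G.V := by
      letI := G.fin
      exact Nat.card_eq_fintype_card.symm
    have h2 : H.order = Nat.card H.V := by
      letI := H.fin
      exact Nat.card_eq_fintype_card.symm
    rw [h1, h2, Nat.card_congr e.symm]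
  refine ⟨by omega, ?_⟩
  intro S hS
  have hpre : (⇑e ⁻¹' S).ncard = S.ncard := by
    have h1 : ⇑e ⁻¹' S = ⇑e.symm '' S := by
      ext x
      simp [Equiv.eq_symm_apply, eq_comm]
    rw [h1, Set.ncard_image_of_injective _ e.symm.injective]
  obtain ⟨⟨a0⟩, hp⟩ := hconn (⇑e ⁻¹' S) (by omega)
  constructor
  · exact ⟨⟨e a0.1, a0.2⟩⟩
  · intro p q
    have hmemp : e.symm p.1 ∉ ⇑e ⁻¹' S := by
      simp only [Set.mem_preimage, Equiv.apply_symm_apply]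
      exact p.2
    have hmemq : e.symm q.1 ∉ ⇑e ⁻¹' S := by
      simp only [Set.mem_preimage, Equiv.apply_symm_apply]
      exact q.2
    have key := rtg_lift'
      (fun c : (G.deleteVerts (⇑e ⁻¹' S)).V =>
        (⟨e c.1, c.2⟩ : (H.deleteVerts S).V))
      (t := (H.deleteVerts S).Adj)
      (fun x y hxy => Relation.ReflTransGen.single (by
        show 0 < H.mult (e x.1) (e y.1)
        rw [he]
        exact hxy))
      (hp ⟨e.symm p.1, hmemp⟩ ⟨e.symm q.1, hmemq⟩)
    beta_reduce at key
    have hpeq : (⟨e (e.symm p.1), hmemp⟩ : (H.deleteVerts S).V) = p := by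
      apply Subtype.ext
      simp
    have hqeq : (⟨e (e.symm q.1), hmemq⟩ : (H.deleteVerts S).V) = q := by
      apply Subtype.ext
      simp
    rw [hpeq, hqeq] at key
    exact key

end Aux

/-- If `G` is a 3-connected multigraph, `u, v, w` are three pairwise
adjacent vertices each having at least four distinct neighbours, and `G'` is
obtained from `G` by the Δ-YY transformation on `u, v, w`, then `G'` is
3-connected. -/
theorem stmt_6 (G G' : MG) (hG : G.KConnected 3) (u v w : G.V)
    (hd : G.IsDelta u v w)
    (hu : 4 ≤ {y : G.V | G.Adj u y}.ncard)
    (hv : 4 ≤ {y : G.V | G.Adj v y}.ncard)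
    (hw : 4 ≤ {y : G.V | G.Adj w y}.ncard)
    (hiso : MG.Iso (G.deltaYY u v w) G') : G'.KConnected 3 := by
  obtain ⟨huv, huw, hvw, -, -, -⟩ := hd
  exact kconn_of_iso hiso (deltaYY_kconn G hG u v w huv huw hvw hu hv hw)
end

section
/- Any 6-regular multigraph containing one of the excluded subgraphs lies in an infinite Δ-YY equivalence class. -/
open scoped Classical

noncomputable section
namespace MG

attribute [local instance] MG.fin

lemma val_eq {α : Type} {p : α → Prop} {x y : {a : α // p a}} (h : x = y) :
    x.1 = y.1 := congrArg Subtype.val h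

lemma iso_refl (G : MG) : Iso G G := ⟨Equiv.refl _, fun _ _ => rfl⟩

lemma order_eq_of_iso {G H : MG} (h : Iso G H) : G.order = H.order := by
  obtain ⟨e, -⟩ := h
  unfold order
  exact Fintype.card_congr e

lemma dyy_refl (G : MG) : DYYEquiv G G := Relation.EqvGen.refl G

lemma dyy_trans {G H K : MG} (h1 : DYYEquiv G H) (h2 : DYYEquiv H K) :
    DYYEquiv G K := Relation.EqvGen.trans _ _ _ h1 h2

lemma dyy_of_delta {G : MG} {u v w : G.V} (h : G.IsDelta u v w) :
    DYYEquiv G (G.deltaYY u v w) :=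
  Relation.EqvGen.rel _ _ (Or.inl (Or.inl ⟨u, v, w, h, iso_refl _⟩))

lemma dyy_of_wye {G : MG} {x u v w : G.V} (h : G.IsWye x u v w) :
    DYYEquiv G (G.yyDelta x u v w) :=
  Relation.EqvGen.rel _ _ (Or.inl (Or.inr ⟨x, u, v, w, h, iso_refl _⟩))

lemma deg_eq (G : MG) (inst : Fintype G.V) (v : G.V) :
    G.deg v = @Finset.sum _ _ _ (@Finset.univ _ inst) (G.mult v) := by
  rw [Subsingleton.elim inst G.fin]; rfl

lemma order_eq (G : MG) (inst : Fintype G.V) :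
    G.order = @Fintype.card _ inst := by
  rw [Subsingleton.elim inst G.fin]; rfl

lemma order_deltaYY (G : MG) (u v w : G.V) :
    (G.deltaYY u v w).order = G.order + 1 := by
  rw [order_eq (G.deltaYY u v w) (@instFintypeOption _ G.fin)]
  show @Fintype.card (Option G.V) _ = _
  rw [@Fintype.card_option _ G.fin]
  rfl

lemma triCount_eval {V : Type} (u v w a b : V) :
    triCount u v w a b =
      if (a = u ∧ b = v) ∨ (a = v ∧ b = u) ∨ (a = u ∧ b = w) ∨ (a = w ∧ b = u)
        ∨ (a = v ∧ b = w) ∨ (a = w ∧ b = v) then 1 else 0 := by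
  unfold triCount
  congr 1
  simp only [Set.mem_insert_iff, Set.mem_singleton_iff, Sym2.eq_iff, eq_iff_iff]
  tauto

lemma triCount_le_one {V : Type} (u v w a b : V) : triCount u v w a b ≤ 1 := by
  unfold triCount; split <;> omega

lemma triCount_self {V : Type} (u v w a : V) (huv : u ≠ v) (huw : u ≠ w)
    (hvw : v ≠ w) : triCount u v w a a = 0 := by
  rw [triCount_eval]
  rcases eq_or_ne a u with rfl | h1 <;> rcases eq_or_ne a v with rfl | h2 <;>
    rcases eq_or_ne a w with rfl | h3 <;> simp_all

lemma pin_master {G : MG} (hreg : G.Regular 6) (v : G.V) (t : Finset G.V)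
    (h : 6 ≤ ∑ y ∈ t, G.mult v y) :
    (∑ y ∈ t, G.mult v y = 6) ∧ ∀ z ∉ t, G.mult v z = 0 := by
  letI := G.fin
  have hle : ∀ s : Finset G.V, ∑ y ∈ s, G.mult v y ≤ 6 := by
    intro s
    have h6 := hreg v
    rw [deg_eq G inferInstance v] at h6
    calc ∑ y ∈ s, G.mult v y ≤ ∑ y, G.mult v y :=
          Finset.sum_le_sum_of_subset (Finset.subset_univ s)
      _ = 6 := h6
  refine ⟨le_antisymm (hle t) h, fun z hz => ?_⟩
  have h2 := hle (insert z t)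
  rw [Finset.sum_insert hz] at h2
  have h1 := hle t
  omega

lemma sum_indicator_two {V : Type} [Fintype V] (u v w : V) (huv : u ≠ v)
    (huw : u ≠ w) (hvw : v ≠ w) :
    ∑ b : V, (if b = u ∨ b = v ∨ b = w then 2 else 0) = 6 := by
  have key : ∀ b : V, (if b = u ∨ b = v ∨ b = w then 2 else 0) =
      (if b = u then 2 else 0) + ((if b = v then 2 else 0) + (if b = w then 2 else 0)) := by
    intro b
    rcases eq_or_ne b u with rfl | h1 <;> rcases eq_or_ne b v with rfl | h2 <;>
      rcases eq_or_ne b w with rfl | h3 <;> simp_all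
  rw [Finset.sum_congr rfl (fun b _ => key b), Finset.sum_add_distrib]
  rw [Finset.sum_add_distrib]
  simp [Finset.sum_ite_eq']

lemma sum_triCount {V : Type} [Fintype V] (s : Finset V) (u v w a : V)
    (huv : u ≠ v) (huw : u ≠ w) (hvw : v ≠ w) :
    ∑ b ∈ s, triCount u v w a b =
      if a = u then ((if v ∈ s then 1 else 0) + (if w ∈ s then 1 else 0))
      else if a = v then ((if u ∈ s then 1 else 0) + (if w ∈ s then 1 else 0))
      else if a = w then ((if u ∈ s then 1 else 0) + (if v ∈ s then 1 else 0))
      else 0 := by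
  rcases eq_or_ne a u with rfl | hau
  · rw [if_pos rfl]
    have key : ∀ b ∈ s, triCount a v w a b =
        (if b = v then 1 else 0) + (if b = w then 1 else 0) := by
      intro b _
      rw [triCount_eval]
      rcases eq_or_ne b v with rfl | h2 <;> rcases eq_or_ne b w with rfl | h3 <;> simp_all
    rw [Finset.sum_congr rfl key, Finset.sum_add_distrib]
    simp [Finset.sum_ite_eq']
  · rw [if_neg hau]
    rcases eq_or_ne a v with rfl | hav
    · rw [if_pos rfl]
      have key : ∀ b ∈ s, triCount u a w a b =
          (if b = u then 1 else 0) + (if b = w then 1 else 0) := by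
        intro b _
        rw [triCount_eval]
        rcases eq_or_ne b u with rfl | h2 <;> rcases eq_or_ne b w with rfl | h3 <;> simp_all
      rw [Finset.sum_congr rfl key, Finset.sum_add_distrib]
      simp [Finset.sum_ite_eq']
    · rw [if_neg hav]
      rcases eq_or_ne a w with rfl | haw
      · rw [if_pos rfl]
        have key : ∀ b ∈ s, triCount u v a a b =
            (if b = u then 1 else 0) + (if b = v then 1 else 0) := by
          intro b _
          rw [triCount_eval]
          rcases eq_or_ne b u with rfl | h2 <;> rcases eq_or_ne b v with rfl | h3 <;> simp_all
        rw [Finset.sum_congr rfl key, Finset.sum_add_distrib]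
        simp [Finset.sum_ite_eq']
      · rw [if_neg haw]
        refine Finset.sum_eq_zero fun b _ => ?_
        rw [triCount_eval]
        rcases eq_or_ne b u with rfl | h2 <;> rcases eq_or_ne b v with rfl | h3 <;>
          rcases eq_or_ne b w with rfl | h4 <;> simp_all

lemma regular_deltaYY {G : MG} (hreg : G.Regular 6) {u v w : G.V}
    (hd : G.IsDelta u v w) : (G.deltaYY u v w).Regular 6 := by
  obtain ⟨huv, huw, hvw, auv, auw, avw⟩ := hd
  letI := G.fin
  intro a
  rw [deg_eq _ inferInstance]
  show (∑ b : Option G.V, G.deltaMult u v w a b) = 6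
  rw [Fintype.sum_option]
  have hle : ∀ (z b : G.V), triCount u v w z b ≤ G.mult z b := by
    intro z b; rw [triCount_eval]; split
    · rename_i h
      rcases h with ⟨rfl, rfl⟩ | ⟨rfl, rfl⟩ | ⟨rfl, rfl⟩ | ⟨rfl, rfl⟩ | ⟨rfl, rfl⟩ | ⟨rfl, rfl⟩
      · exact auv
      · rw [G.symm]; exact auv
      · exact auw
      · rw [G.symm]; exact auw
      · exact avw
      · rw [G.symm]; exact avw
    · exact Nat.zero_le _
  rcases a with _ | a
  · show G.deltaMult u v w none none +
      (∑ b : G.V, G.deltaMult u v w none (some b)) = 6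
    show 0 + (∑ b : G.V, if b = u ∨ b = v ∨ b = w then 2 else 0) = 6
    rw [zero_add, sum_indicator_two u v w huv huw hvw]
  · show G.deltaMult u v w (some a) none +
      (∑ b : G.V, G.deltaMult u v w (some a) (some b)) = 6
    show (if a = u ∨ a = v ∨ a = w then 2 else 0) +
      (∑ b : G.V, (G.mult a b - triCount u v w a b)) = 6
    rw [Finset.sum_tsub_distrib _ (fun b _ => hle a b)]
    have hm : ∑ b : G.V, G.mult a b = 6 := by
      have h6 := hreg a; rw [deg_eq G inferInstance a] at h6; exact h6
    rw [hm, sum_triCount Finset.univ u v w a huv huw hvw]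
    simp only [Finset.mem_univ, if_true]
    rcases eq_or_ne a u with rfl | h1
    · simp [huv, huw]
    · rcases eq_or_ne a v with rfl | h2
      · simp [huv.symm, hvw]
      · rcases eq_or_ne a w with rfl | h3
        · simp [huw.symm, hvw.symm]
        · simp [h1, h2, h3]

lemma regular_yyDelta {G : MG} (hreg : G.Regular 6) {x u v w : G.V}
    (hw : G.IsWye x u v w) : (G.yyDelta x u v w).Regular 6 := by
  obtain ⟨huv, huw, hvw, hxu, hxv, hxw, mxu, mxv, mxw, hz⟩ := hw
  letI := G.fin
  rintro ⟨a, hax⟩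
  erw [deg_eq _ inferInstance]
  have key : ∀ b : {y : G.V // y ≠ x},
      (G.yyDelta x u v w).mult ⟨a, hax⟩ b = G.mult a b.1 + triCount u v w a b.1 := by
    intro b
    show (if (⟨a, hax⟩ : {y : G.V // y ≠ x}) = b then 0
        else G.mult a b.1 + triCount u v w a b.1) = _
    rcases eq_or_ne (⟨a, hax⟩ : {y : G.V // y ≠ x}) b with rfl | h
    · rw [if_pos rfl]
      simp [G.loopless, triCount_self u v w a huv huw hvw]
    · rw [if_neg h]
  erw [Finset.sum_congr rfl (fun b _ => key b)]
  erw [← Finset.sum_subtype (Finset.univ.erase x) (by simp)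
    (fun b => G.mult a b + triCount u v w a b)]
  rw [Finset.sum_add_distrib]
  have hs := Finset.sum_erase_add Finset.univ (G.mult a) (Finset.mem_univ x)
  have hm : ∑ b : G.V, G.mult a b = 6 := by
    have h6 := hreg a; rw [deg_eq G inferInstance a] at h6; exact h6
  rw [hm] at hs
  rw [sum_triCount (Finset.univ.erase x) u v w a huv huw hvw]
  have hmu : u ∈ Finset.univ.erase x := by simp [Ne.symm hxu]
  have hmv : v ∈ Finset.univ.erase x := by simp [Ne.symm hxv]
  have hmw : w ∈ Finset.univ.erase x := by simp [Ne.symm hxw]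
  rcases eq_or_ne a u with rfl | h1
  · have hax2 : G.mult a x = 2 := by rw [G.symm]; exact mxu
    rw [if_pos rfl, if_pos hmv, if_pos hmw]
    omega
  · rcases eq_or_ne a v with rfl | h2
    · have hax2 : G.mult a x = 2 := by rw [G.symm]; exact mxv
      rw [if_neg h1, if_pos rfl, if_pos hmu, if_pos hmw]
      omega
    · rcases eq_or_ne a w with rfl | h3
      · have hax2 : G.mult a x = 2 := by rw [G.symm]; exact mxw
        rw [if_neg h1, if_neg h2, if_pos rfl, if_pos hmu, if_pos hmv]
        omega
      · have hax2 : G.mult a x = 0 := by rw [G.symm]; exact hz a h1 h2 h3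
        rw [if_neg h1, if_neg h2, if_neg h3]
        omega
lemma triCount_zero {V : Type} {u v w a b : V}
    (h : ¬((a = u ∧ b = v) ∨ (a = v ∧ b = u) ∨ (a = u ∧ b = w) ∨ (a = w ∧ b = u)
      ∨ (a = v ∧ b = w) ∨ (a = w ∧ b = v))) : triCount u v w a b = 0 := by
  rw [triCount_eval, if_neg h]

lemma addOn_mem {G : MG} {x : G.V} {T : Set G.V} (h : G.AddOnAt x T) : x ∈ T := by
  induction h with
  | double a b _ _ => left; rfl
  | delta a b c => left; rfl
  | link a b c d S => left; left; rfl

lemma addOn_units {G : MG} {x : G.V} {T : Set G.V} (h : G.AddOnAt x T) :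
    (∃ e ∈ T, e ≠ x ∧ 2 ≤ G.mult x e) ∨
    (∃ p ∈ T, ∃ q ∈ T, p ≠ q ∧ p ≠ x ∧ q ≠ x ∧ 1 ≤ G.mult x p ∧ 1 ≤ G.mult x q) := by
  cases h with
  | double a b hab h2 => exact Or.inl ⟨b, by right; rfl, Ne.symm hab, h2⟩
  | delta a b c hab hac hbc m1 m2 m3 =>
      exact Or.inr ⟨b, by right; left; rfl, c, by right; right; rfl,
        hbc, Ne.symm hab, Ne.symm hac, m1, m2⟩
  | link a b c d S hab hac had hbc hbd hcd m1 m2 m3 m4 hS hdisj =>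
      exact Or.inr ⟨b, by left; right; left; rfl, d, by left; right; right; rfl,
        hbd, Ne.symm hab, Ne.symm had, m1, m2⟩

lemma addOn_transport {G G' : MG} (f : G.V → G'.V) {x : G.V} {T : Set G.V}
    (h : G.AddOnAt x T) :
    Set.InjOn f T → (∀ p ∈ T, ∀ q ∈ T, G'.mult (f p) (f q) = G.mult p q) →
    G'.AddOnAt (f x) (f '' T) := by
  induction h with
  | double a b hab h2 =>
      intro hinj hm
      have himg : f '' {a, b} = {f a, f b} := by
        simp [Set.image_insert_eq]
      rw [himg]
      have hab' : f a ≠ f b := fun hh =>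
        hab (hinj (by left; rfl) (by right; rfl) hh)
      refine AddOnAt.double _ _ hab' ?_
      rw [hm a (by left; rfl) b (by right; rfl)]; exact h2
  | delta a b c hab hac hbc m1 m2 m3 =>
      intro hinj hm
      have himg : f '' {a, b, c} = {f a, f b, f c} := by
        simp [Set.image_insert_eq]
      rw [himg]
      have ma : a ∈ ({a, b, c} : Set G.V) := by left; rfl
      have mb : b ∈ ({a, b, c} : Set G.V) := by right; left; rfl
      have mc : c ∈ ({a, b, c} : Set G.V) := by right; right; rfl
      refine AddOnAt.delta _ _ _ (fun hh => hab (hinj ma mb hh))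
        (fun hh => hac (hinj ma mc hh)) (fun hh => hbc (hinj mb mc hh)) ?_ ?_ ?_
      · rw [hm a ma b mb]; exact m1
      · rw [hm a ma c mc]; exact m2
      · rw [hm b mb c mc]; exact m3
  | link a b c d S hab hac had hbc hbd hcd m1 m2 m3 m4 hS hdisj ih =>
      intro hinj hm
      have hcS : c ∈ S := addOn_mem hS
      have ma : a ∈ ({a, b, d} : Set G.V) ∪ S := by left; left; rfl
      have mb : b ∈ ({a, b, d} : Set G.V) ∪ S := by left; right; left; rfl
      have md : d ∈ ({a, b, d} : Set G.V) ∪ S := by left; right; right; rfl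
      have hSsub : S ⊆ ({a, b, d} : Set G.V) ∪ S := Set.subset_union_right
      have mc : c ∈ ({a, b, d} : Set G.V) ∪ S := hSsub hcS
      have himg : f '' (({a, b, d} : Set G.V) ∪ S) = {f a, f b, f d} ∪ f '' S := by
        rw [Set.image_union]
        simp [Set.image_insert_eq]
      rw [himg]
      have ihS := ih (hinj.mono hSsub) (fun p hp q hq => hm p (hSsub hp) q (hSsub hq))
      refine AddOnAt.link (f a) (f b) (f c) (f d) (f '' S)
        (fun hh => hab (hinj ma mb hh)) (fun hh => hac (hinj ma mc hh))
        (fun hh => had (hinj ma md hh)) (fun hh => hbc (hinj mb mc hh))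
        (fun hh => hbd (hinj mb md hh)) (fun hh => hcd (hinj mc md hh))
        ?_ ?_ ?_ ?_ ihS ?_
      · rw [hm a ma b mb]; exact m1
      · rw [hm a ma d md]; exact m2
      · rw [hm b mb c mc]; exact m3
      · rw [hm c mc d md]; exact m4
      · rw [Set.eq_empty_iff_forall_notMem]
        rintro z ⟨⟨s, hsS, rfl⟩, hz2⟩
        have : s ∈ S ∩ {a, b, d} := by
          refine ⟨hsS, ?_⟩
          rcases hz2 with h | h | h
          · left; exact hinj (hSsub hsS) ma h
          · right; left; exact hinj (hSsub hsS) mb h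
          · right; right; exact hinj (hSsub hsS) md h
        rw [hdisj] at this
        exact this

def Config1 (G : MG) : Prop :=
  ∃ a b c : G.V, a ≠ b ∧ a ≠ c ∧ b ≠ c ∧
    2 ≤ G.mult a b ∧ 1 ≤ G.mult a c ∧ 1 ≤ G.mult b c

lemma deltaYY_mult_ss (G : MG) (u v w a b : G.V) :
    (G.deltaYY u v w).mult (some a) (some b) = G.mult a b - triCount u v w a b := rfl

lemma deltaYY_mult_sn (G : MG) (u v w a : G.V) :
    (G.deltaYY u v w).mult (some a) none =
      if a = u ∨ a = v ∨ a = w then 2 else 0 := rfl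

lemma deltaYY_mult_ns (G : MG) (u v w b : G.V) :
    (G.deltaYY u v w).mult none (some b) =
      if b = u ∨ b = v ∨ b = w then 2 else 0 := rfl

lemma yyDelta_mult_ne {G : MG} (x u v w : G.V) (a b : {y : G.V // y ≠ x})
    (h : a ≠ b) :
    (G.yyDelta x u v w).mult a b = G.mult a.1 b.1 + triCount u v w a.1 b.1 := by
  show (if a = b then 0 else G.mult a.1 b.1 + triCount u v w a.1 b.1) = _
  rw [if_neg h]

lemma config1_step {G : MG} (h : Config1 G) :
    ∃ H, DYYEquiv G H ∧ Config1 H ∧ H.order = G.order + 1 := by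
  obtain ⟨a, b, c, hab, hac, hbc, m2, m1, m1'⟩ := h
  have hd : G.IsDelta a b c :=
    ⟨hab, hac, hbc, show 0 < G.mult a b by omega, m1, m1'⟩
  refine ⟨G.deltaYY a b c, dyy_of_delta hd, ?_, order_deltaYY G a b c⟩
  refine ⟨none, some a, some b, fun hh => (nomatch hh),
    fun hh => (nomatch hh),
    fun hh => hab (Option.some_injective _ hh), ?_, ?_, ?_⟩
  · rw [deltaYY_mult_ns, if_pos (Or.inl rfl)]
  · rw [deltaYY_mult_ns, if_pos (Or.inr (Or.inl rfl))]; omega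
  · rw [deltaYY_mult_ss]
    have := triCount_le_one a b c a b
    omega

lemma config1_grow {G : MG} (h : Config1 G) (n : ℕ) :
    ∃ H, DYYEquiv G H ∧ Config1 H ∧ G.order + n ≤ H.order := by
  induction n with
  | zero => exact ⟨G, dyy_refl G, h, le_refl _⟩
  | succ n ih =>
      obtain ⟨H, e, hc, hle⟩ := ih
      obtain ⟨H', e', hc', ho⟩ := config1_step hc
      exact ⟨H', dyy_trans e e', hc', by omega⟩

lemma not_finite_of_config1 {G H0 : MG} (he : DYYEquiv G H0) (hc : Config1 H0) :
    ¬ G.FiniteClass := by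
  rintro ⟨S, hS⟩
  obtain ⟨H, e, -, hord⟩ := config1_grow hc (S.sup MG.order + 1)
  obtain ⟨H', hH', hiso⟩ := hS H (dyy_trans he e)
  have h1 : H.order = H'.order := order_eq_of_iso hiso
  have h2 : H'.order ≤ S.sup MG.order := Finset.le_sup hH'
  omega

lemma mult_ne {H : MG} {v z : H.V} {k : ℕ} (h : H.mult v z = k) (hk : k ≠ 0) :
    v ≠ z := by
  rintro rfl
  rw [H.loopless] at h
  omega

lemma gadgetW {H : MG} (hreg : H.Regular 6) (v a c e : H.V)
    (hac : a ≠ c) (hae : a ≠ e) (hce : c ≠ e)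
    (hva : H.mult v a = 2) (hvc : H.mult v c = 2) (hve : H.mult v e = 2)
    (hz : ∀ z, z ≠ a → z ≠ c → z ≠ e → H.mult v z = 0) :
    ∃ H' : MG, DYYEquiv H H' ∧ H'.Regular 6 ∧
      ∃ f : {y : H.V // y ≠ v} → H'.V, Function.Injective f ∧
        (∀ x y : {y : H.V // y ≠ v},
            ¬(x.1 = a ∧ y.1 = c) → ¬(x.1 = c ∧ y.1 = a) →
            ¬(x.1 = a ∧ y.1 = e) → ¬(x.1 = e ∧ y.1 = a) →
            ¬(x.1 = c ∧ y.1 = e) → ¬(x.1 = e ∧ y.1 = c) →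
            H'.mult (f x) (f y) = H.mult x.1 y.1) ∧
        ∀ (ha : a ≠ v) (hc : c ≠ v),
          H'.mult (f ⟨a, ha⟩) (f ⟨c, hc⟩) = H.mult a c + 1 := by
  have hva' : v ≠ a := mult_ne hva (by omega)
  have hvc' : v ≠ c := mult_ne hvc (by omega)
  have hve' : v ≠ e := mult_ne hve (by omega)
  have hw : H.IsWye v a c e := ⟨hac, hae, hce, hva', hvc', hve', hva, hvc, hve, hz⟩
  refine ⟨H.yyDelta v a c e, dyy_of_wye hw, regular_yyDelta hreg hw,
    fun y => y, ?_, ?_, ?_⟩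
  · intro x y hxy
    exact hxy
  · intro x y e1 e2 e3 e4 e5 e6
    rcases eq_or_ne x y with rfl | hxy
    · rw [H.loopless]
      exact (H.yyDelta v a c e).loopless x
    · rw [yyDelta_mult_ne v a c e x y hxy, triCount_zero (by tauto), add_zero]
  · intro ha hc
    rw [yyDelta_mult_ne v a c e ⟨a, ha⟩ ⟨c, hc⟩
        (fun hh => hac (congrArg Subtype.val hh))]
    rw [show ((⟨a, ha⟩ : {y : H.V // y ≠ v}) : H.V) = a from rfl,
      show ((⟨c, hc⟩ : {y : H.V // y ≠ v}) : H.V) = c from rfl,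
      triCount_eval, if_pos (Or.inl ⟨rfl, rfl⟩)]

lemma gadget {H : MG} (hreg : H.Regular 6) (v a c p q : H.V)
    (hac : a ≠ c) (hap : a ≠ p) (haq : a ≠ q) (hcp : c ≠ p) (hcq : c ≠ q)
    (hpq : p ≠ q)
    (hva : H.mult v a = 2) (hvc : H.mult v c = 2)
    (hvp : H.mult v p = 1) (hvq : H.mult v q = 1) (hmpq : 1 ≤ H.mult p q)
    (hz : ∀ z, z ≠ a → z ≠ c → z ≠ p → z ≠ q → H.mult v z = 0) :
    ∃ H' : MG, DYYEquiv H H' ∧ H'.Regular 6 ∧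
      ∃ f : {y : H.V // y ≠ v} → H'.V, Function.Injective f ∧
        (∀ x y : {y : H.V // y ≠ v},
            ¬(x.1 = a ∧ y.1 = c) → ¬(x.1 = c ∧ y.1 = a) →
            ¬(x.1 = p ∧ y.1 = q) → ¬(x.1 = q ∧ y.1 = p) →
            H'.mult (f x) (f y) = H.mult x.1 y.1) ∧
        ∀ (ha : a ≠ v) (hc : c ≠ v),
          H'.mult (f ⟨a, ha⟩) (f ⟨c, hc⟩) = H.mult a c + 1 := by
  have hva' : v ≠ a := mult_ne hva (by omega)
  have hvc' : v ≠ c := mult_ne hvc (by omega)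
  have hvp' : v ≠ p := mult_ne hvp (by omega)
  have hvq' : v ≠ q := mult_ne hvq (by omega)
  have hd : H.IsDelta v p q :=
    ⟨hvp', hvq', hpq, show 0 < H.mult v p by omega, show 0 < H.mult v q by omega,
      hmpq⟩
  have hreg1 : (H.deltaYY v p q).Regular 6 := regular_deltaYY hreg hd
  have hw : (H.deltaYY v p q).IsWye (some v) (some a) (some c) none := by
    refine ⟨fun hh => hac (Option.some_injective _ hh),
      fun hh => (nomatch hh), fun hh => (nomatch hh),
      fun hh => hva' (Option.some_injective _ hh),
      fun hh => hvc' (Option.some_injective _ hh),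
      fun hh => (nomatch hh), ?_, ?_, ?_, ?_⟩
    · rw [deltaYY_mult_ss, triCount_zero (by tauto), hva]
    · rw [deltaYY_mult_ss, triCount_zero (by tauto), hvc]
    · rw [deltaYY_mult_sn, if_pos (Or.inl rfl)]
    · rintro (_ | z) hya hyc hyn
      · exact absurd rfl hyn
      have hza : z ≠ a := fun hh => hya (by rw [hh])
      have hzc : z ≠ c := fun hh => hyc (by rw [hh])
      rw [deltaYY_mult_ss]
      rcases eq_or_ne z p with rfl | hzp
      · rw [triCount_eval, if_pos (Or.inl ⟨rfl, rfl⟩), hvp]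
      rcases eq_or_ne z q with rfl | hzq
      · rw [triCount_eval, if_pos (Or.inr (Or.inr (Or.inl ⟨rfl, rfl⟩))), hvq]
      rw [hz z hza hzc hzp hzq]
      omega
  refine ⟨(H.deltaYY v p q).yyDelta (some v) (some a) (some c) none,
    dyy_trans (dyy_of_delta hd) (dyy_of_wye hw), regular_yyDelta hreg1 hw,
    fun y => ⟨some y.1, fun hh => y.2 (Option.some_injective _ hh)⟩, ?_, ?_, ?_⟩
  · intro x y hxy
    have h1 := congrArg Subtype.val hxy
    exact Subtype.ext (Option.some_injective _ h1)
  · intro x y e1 e2 e3 e4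
    beta_reduce
    rcases eq_or_ne x y with rfl | hxy
    · rw [H.loopless]
      exact ((H.deltaYY v p q).yyDelta (some v) (some a) (some c) none).loopless _
    · rw [yyDelta_mult_ne (G := H.deltaYY v p q) (some v) (some a) (some c) none
        ⟨some x.1, fun hh => x.2 (Option.some_injective _ hh)⟩
        ⟨some y.1, fun hh => y.2 (Option.some_injective _ hh)⟩
        (fun hh => hxy (Subtype.ext (Option.some_injective _
          (congrArg Subtype.val hh))))]
      rw [show ((⟨some x.1, fun hh => x.2 (Option.some_injective _ hh)⟩ :
          {z : (H.deltaYY v p q).V // z ≠ some v}) : (H.deltaYY v p q).V)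
          = some x.1 from rfl,
        show ((⟨some y.1, fun hh => y.2 (Option.some_injective _ hh)⟩ :
          {z : (H.deltaYY v p q).V // z ≠ some v}) : (H.deltaYY v p q).V)
          = some y.1 from rfl]
      rw [deltaYY_mult_ss, triCount_zero (show ¬_ by
        rintro (⟨h1, h2⟩ | ⟨h1, h2⟩ | ⟨h1, h2⟩ | ⟨h1, h2⟩ | ⟨h1, h2⟩ | ⟨h1, h2⟩)
        · exact x.2 h1
        · exact y.2 h2
        · exact x.2 h1
        · exact y.2 h2
        · exact e3 ⟨h1, h2⟩
        · exact e4 ⟨h1, h2⟩), Nat.sub_zero]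
      erw [triCount_zero (show ¬_ by
        rintro (⟨h1, h2⟩ | ⟨h1, h2⟩ | ⟨h1, h2⟩ | ⟨h1, h2⟩ | ⟨h1, h2⟩ | ⟨h1, h2⟩)
        · exact e1 ⟨Option.some_injective _ h1, Option.some_injective _ h2⟩
        · exact e2 ⟨Option.some_injective _ h1, Option.some_injective _ h2⟩
        · exact Option.some_ne_none _ h2
        · exact Option.some_ne_none _ h1
        · exact Option.some_ne_none _ h2
        · exact Option.some_ne_none _ h1), add_zero]
  · intro ha hc
    beta_reduce
    rw [yyDelta_mult_ne (G := H.deltaYY v p q) (some v) (some a) (some c) none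
        ⟨some a, fun hh => ha (Option.some_injective _ hh)⟩
        ⟨some c, fun hh => hc (Option.some_injective _ hh)⟩
        (fun hh => hac (Option.some_injective _ (congrArg Subtype.val hh)))]
    rw [show ((⟨some a, fun hh => ha (Option.some_injective _ hh)⟩ :
        {z : (H.deltaYY v p q).V // z ≠ some v}) : (H.deltaYY v p q).V)
        = some a from rfl,
      show ((⟨some c, fun hh => hc (Option.some_injective _ hh)⟩ :
        {z : (H.deltaYY v p q).V // z ≠ some v}) : (H.deltaYY v p q).V)
        = some c from rfl]
    rw [deltaYY_mult_ss, triCount_zero (by tauto), Nat.sub_zero]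
    erw [triCount_eval]
    rw [if_pos (Or.inl ⟨rfl, rfl⟩)]
lemma sum3 (G : MG) (v a b c : G.V) (hab : a ≠ b) (hac : a ≠ c) (hbc : b ≠ c) :
    ∑ y ∈ ({a, b, c} : Finset G.V), G.mult v y =
      G.mult v a + G.mult v b + G.mult v c := by
  rw [Finset.sum_insert (by simp [hab, hac]), Finset.sum_insert (by simp [hbc]),
    Finset.sum_singleton]
  ring

lemma sum4 (G : MG) (v a b c d : G.V) (hab : a ≠ b) (hac : a ≠ c) (had : a ≠ d)
    (hbc : b ≠ c) (hbd : b ≠ d) (hcd : c ≠ d) :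
    ∑ y ∈ ({a, b, c, d} : Finset G.V), G.mult v y =
      G.mult v a + G.mult v b + G.mult v c + G.mult v d := by
  rw [Finset.sum_insert (by simp [hab, hac, had]),
    Finset.sum_insert (by simp [hbc, hbd]), Finset.sum_insert (by simp [hcd]),
    Finset.sum_singleton]
  ring

lemma pin3 {G : MG} (hreg : G.Regular 6) (v a c e : G.V)
    (hac : a ≠ c) (hae : a ≠ e) (hce : c ≠ e)
    (ha : G.mult v a = 2) (hc : G.mult v c = 2) (he : 2 ≤ G.mult v e) :
    G.mult v e = 2 ∧ ∀ z, z ≠ a → z ≠ c → z ≠ e → G.mult v z = 0 := by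
  have hsum := sum3 G v a c e hac hae hce
  obtain ⟨heq, hz⟩ := pin_master hreg v {a, c, e} (by rw [hsum]; omega)
  rw [hsum] at heq
  exact ⟨by omega, fun z h1 h2 h3 => hz z (by simp [h1, h2, h3])⟩

lemma pin4 {G : MG} (hreg : G.Regular 6) (v a c p q : G.V)
    (hac : a ≠ c) (hap : a ≠ p) (haq : a ≠ q) (hcp : c ≠ p) (hcq : c ≠ q)
    (hpq : p ≠ q)
    (ha : G.mult v a = 2) (hc : G.mult v c = 2)
    (hp : 1 ≤ G.mult v p) (hq : 1 ≤ G.mult v q) :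
    G.mult v p = 1 ∧ G.mult v q = 1 ∧
      ∀ z, z ≠ a → z ≠ c → z ≠ p → z ≠ q → G.mult v z = 0 := by
  have hsum := sum4 G v a c p q hac hap haq hcp hcq hpq
  obtain ⟨heq, hz⟩ := pin_master hreg v {a, c, p, q} (by rw [hsum]; omega)
  rw [hsum] at heq
  exact ⟨by omega, by omega, fun z h1 h2 h3 h4 => hz z (by simp [h1, h2, h3, h4])⟩

lemma pinr {G : MG} (hreg : G.Regular 6) {v p q : G.V} (hpq : p ≠ q)
    (hp : 2 ≤ G.mult v p) (hq : 2 ≤ G.mult v q)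
    (hu : (∃ e, e ≠ p ∧ e ≠ q ∧ 2 ≤ G.mult v e) ∨
      (∃ x y, x ≠ y ∧ x ≠ p ∧ x ≠ q ∧ y ≠ p ∧ y ≠ q ∧
        1 ≤ G.mult v x ∧ 1 ≤ G.mult v y)) :
    G.mult v p = 2 ∧ G.mult v q = 2 := by
  rcases hu with ⟨e, hep, heq', he⟩ | ⟨x, y, hxy, hxp, hxq, hyp, hyq, hx, hy⟩
  · have hsum := sum3 G v p q e hpq hep.symm heq'.symm
    obtain ⟨heq, -⟩ := pin_master hreg v {p, q, e} (by rw [hsum]; omega)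
    rw [hsum] at heq
    omega
  · have hsum := sum4 G v p q x y hpq hxp.symm hyp.symm hxq.symm hyq.symm hxy
    obtain ⟨heq, -⟩ := pin_master hreg v {p, q, x, y} (by rw [hsum]; omega)
    rw [hsum] at heq
    omega

lemma addLemma {H : MG} (hreg : H.Regular 6) {v : H.V} {S : Set H.V}
    (hS : H.AddOnAt v S) :
    ∀ a c : H.V, a ∉ S → c ∉ S → a ≠ c → H.mult v a = 2 → H.mult v c = 2 →
      ∃ H' : MG, DYYEquiv H H' ∧ H'.Regular 6 ∧
        ∃ f : {y : H.V // y ∉ S} → H'.V, Function.Injective f ∧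
          (∀ x y : {y : H.V // y ∉ S},
            ¬(x.1 = a ∧ y.1 = c) → ¬(x.1 = c ∧ y.1 = a) →
            H'.mult (f x) (f y) = H.mult x.1 y.1) ∧
          ∀ (ha : a ∉ S) (hc : c ∉ S),
            H'.mult (f ⟨a, ha⟩) (f ⟨c, hc⟩) = H.mult a c + 1 := by
  induction hS with
  | double v0 e hv0e h2 =>
    intro A C hA hC hAC hmA hmC
    have hAv0 : A ≠ v0 := fun h => hA (by rw [h]; exact Set.mem_insert _ _)
    have hAe : A ≠ e := fun h => hA (by rw [h]; exact Set.mem_insert_of_mem _ rfl)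
    have hCv0 : C ≠ v0 := fun h => hC (by rw [h]; exact Set.mem_insert _ _)
    have hCe : C ≠ e := fun h => hC (by rw [h]; exact Set.mem_insert_of_mem _ rfl)
    obtain ⟨he2, hz⟩ := pin3 hreg v0 A C e hAC hAe hCe hmA hmC h2
    obtain ⟨H', he', hreg', f, hinj, hpres, hacc⟩ :=
      gadgetW hreg v0 A C e hAC hAe hCe hmA hmC he2 hz
    refine ⟨H', he', hreg',
      fun y => f ⟨y.1, fun h => y.2 (by rw [h]; exact Set.mem_insert _ _)⟩,
      ?_, ?_, ?_⟩
    · intro x y hxy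
      have h1' := val_eq (hinj hxy)
      exact Subtype.ext h1'
    · intro x y ex1 ex2
      exact hpres _ _ ex1 ex2
        (fun h => y.2 (by rw [h.2]; exact Set.mem_insert_of_mem _ rfl))
        (fun h => x.2 (by rw [h.1]; exact Set.mem_insert_of_mem _ rfl))
        (fun h => y.2 (by rw [h.2]; exact Set.mem_insert_of_mem _ rfl))
        (fun h => x.2 (by rw [h.1]; exact Set.mem_insert_of_mem _ rfl))
    · intro ha hc
      exact hacc hAv0 hCv0
  | delta v0 p q hv0p hv0q hpq m1 m2 m3 =>
    intro A C hA hC hAC hmA hmC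
    have hAv0 : A ≠ v0 := fun h => hA (by rw [h]; exact Set.mem_insert _ _)
    have hAp : A ≠ p := fun h => hA (by rw [h]; right; left; rfl)
    have hAq : A ≠ q := fun h => hA (by rw [h]; right; right; rfl)
    have hCv0 : C ≠ v0 := fun h => hC (by rw [h]; exact Set.mem_insert _ _)
    have hCp : C ≠ p := fun h => hC (by rw [h]; right; left; rfl)
    have hCq : C ≠ q := fun h => hC (by rw [h]; right; right; rfl)
    obtain ⟨h1p, h1q, hz⟩ :=
      pin4 hreg v0 A C p q hAC hAp hAq hCp hCq hpq hmA hmC m1 m2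
    obtain ⟨H', he', hreg', f, hinj, hpres, hacc⟩ :=
      gadget hreg v0 A C p q hAC hAp hAq hCp hCq hpq hmA hmC h1p h1q m3 hz
    refine ⟨H', he', hreg',
      fun y => f ⟨y.1, fun h => y.2 (by rw [h]; exact Set.mem_insert _ _)⟩,
      ?_, ?_, ?_⟩
    · intro x y hxy
      have h1' := val_eq (hinj hxy)
      exact Subtype.ext h1'
    · intro x y ex1 ex2
      exact hpres _ _ ex1 ex2
        (fun h => x.2 (by rw [h.1]; right; left; rfl))
        (fun h => x.2 (by rw [h.1]; right; right; rfl))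
    · intro ha hc
      exact hacc hAv0 hCv0
  | link v0 p r q S0 h1 h2 h3 h4 h5 h6 m1 m2 m3 m4 hS0 hdisj ih =>
    intro A C hA hC hAC hmA hmC
    have hpS0 : p ∉ S0 := fun h => by
      have hmem : p ∈ S0 ∩ {v0, p, q} := ⟨h, by right; left; rfl⟩
      rw [hdisj] at hmem
      exact hmem
    have hqS0 : q ∉ S0 := fun h => by
      have hmem : q ∈ S0 ∩ {v0, p, q} := ⟨h, by right; right; rfl⟩
      rw [hdisj] at hmem
      exact hmem
    have hv0S0 : v0 ∉ S0 := fun h => by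
      have hmem : v0 ∈ S0 ∩ {v0, p, q} := ⟨h, by left; rfl⟩
      rw [hdisj] at hmem
      exact hmem
    have hAS0 : A ∉ S0 := fun h => hA (Set.mem_union_right _ h)
    have hCS0 : C ∉ S0 := fun h => hC (Set.mem_union_right _ h)
    have hAv0 : A ≠ v0 := fun h =>
      hA (by rw [h]; exact Set.mem_union_left _ (by left; rfl))
    have hAp : A ≠ p := fun h =>
      hA (by rw [h]; exact Set.mem_union_left _ (by right; left; rfl))
    have hAq : A ≠ q := fun h =>
      hA (by rw [h]; exact Set.mem_union_left _ (by right; right; rfl))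
    have hCv0 : C ≠ v0 := fun h =>
      hC (by rw [h]; exact Set.mem_union_left _ (by left; rfl))
    have hCp : C ≠ p := fun h =>
      hC (by rw [h]; exact Set.mem_union_left _ (by right; left; rfl))
    have hCq : C ≠ q := fun h =>
      hC (by rw [h]; exact Set.mem_union_left _ (by right; right; rfl))
    -- pin at r
    have hrp2 : H.mult r p = 2 ∧ H.mult r q = 2 := by
      refine pinr hreg h5 (by rw [H.symm]; exact m3) m4 ?_
      rcases addOn_units hS0 with ⟨e, heS0, her, he2⟩ |
        ⟨x, hx, y, hy, hxy, hxr, hyr, hx1, hy1⟩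
      · exact Or.inl ⟨e, fun h => hpS0 (h ▸ heS0), fun h => hqS0 (h ▸ heS0), he2⟩
      · exact Or.inr ⟨x, y, hxy, fun h => hpS0 (h ▸ hx), fun h => hqS0 (h ▸ hx),
          fun h => hpS0 (h ▸ hy), fun h => hqS0 (h ▸ hy), hx1, hy1⟩
    obtain ⟨h1p, h1q, -⟩ :=
      pin4 hreg v0 A C p q hAC hAp hAq hCp hCq h5 hmA hmC m1 m2
    obtain ⟨H1, e1, hreg1, f1, hinj1, hpres1, hacc1⟩ :=
      ih p q hpS0 hqS0 h5 hrp2.1 hrp2.2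
    -- distinctness of images
    have hne1 : ∀ (x y : {z : H.V // z ∉ S0}), x.1 ≠ y.1 → f1 x ≠ f1 y :=
      fun x y h hh => h (val_eq (hinj1 hh))
    have hA1C1 := hne1 ⟨A, hAS0⟩ ⟨C, hCS0⟩ hAC
    have hA1P1 := hne1 ⟨A, hAS0⟩ ⟨p, hpS0⟩ hAp
    have hA1Q1 := hne1 ⟨A, hAS0⟩ ⟨q, hqS0⟩ hAq
    have hC1P1 := hne1 ⟨C, hCS0⟩ ⟨p, hpS0⟩ hCp
    have hC1Q1 := hne1 ⟨C, hCS0⟩ ⟨q, hqS0⟩ hCq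
    have hP1Q1 := hne1 ⟨p, hpS0⟩ ⟨q, hqS0⟩ h5
    -- multiplicities in H1
    have hm1A : H1.mult (f1 ⟨v0, hv0S0⟩) (f1 ⟨A, hAS0⟩) = 2 :=
      (hpres1 ⟨v0, hv0S0⟩ ⟨A, hAS0⟩ (fun h => h1 h.1) (fun h => h3 h.1)).trans hmA
    have hm1C : H1.mult (f1 ⟨v0, hv0S0⟩) (f1 ⟨C, hCS0⟩) = 2 :=
      (hpres1 ⟨v0, hv0S0⟩ ⟨C, hCS0⟩ (fun h => h1 h.1) (fun h => h3 h.1)).trans hmC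
    have hm1p : H1.mult (f1 ⟨v0, hv0S0⟩) (f1 ⟨p, hpS0⟩) = 1 :=
      (hpres1 ⟨v0, hv0S0⟩ ⟨p, hpS0⟩ (fun h => h1 h.1) (fun h => h3 h.1)).trans h1p
    have hm1q : H1.mult (f1 ⟨v0, hv0S0⟩) (f1 ⟨q, hqS0⟩) = 1 :=
      (hpres1 ⟨v0, hv0S0⟩ ⟨q, hqS0⟩ (fun h => h1 h.1) (fun h => h3 h.1)).trans h1q
    have hm1pq : 1 ≤ H1.mult (f1 ⟨p, hpS0⟩) (f1 ⟨q, hqS0⟩) := by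
      rw [hacc1 hpS0 hqS0]
      omega
    have hz1 := (pin4 hreg1 (f1 ⟨v0, hv0S0⟩) (f1 ⟨A, hAS0⟩) (f1 ⟨C, hCS0⟩)
      (f1 ⟨p, hpS0⟩) (f1 ⟨q, hqS0⟩) hA1C1 hA1P1 hA1Q1 hC1P1 hC1Q1 hP1Q1
      hm1A hm1C (le_of_eq hm1p.symm) (le_of_eq hm1q.symm)).2.2
    obtain ⟨H2, e2, hreg2, f2, hinj2, hpres2, hacc2⟩ :=
      gadget hreg1 (f1 ⟨v0, hv0S0⟩) (f1 ⟨A, hAS0⟩) (f1 ⟨C, hCS0⟩)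
        (f1 ⟨p, hpS0⟩) (f1 ⟨q, hqS0⟩) hA1C1 hA1P1 hA1Q1 hC1P1 hC1Q1 hP1Q1
        hm1A hm1C hm1p hm1q hm1pq hz1
    refine ⟨H2, dyy_trans e1 e2, hreg2,
      fun y => f2 ⟨f1 ⟨y.1, fun h => y.2 (Set.mem_union_right _ h)⟩,
        fun hh => y.2 (by
          rw [show y.1 = v0 from val_eq (hinj1 hh)]
          exact Set.mem_union_left _ (by left; rfl))⟩, ?_, ?_, ?_⟩
    · intro x y hxy
      have t1 := val_eq (hinj2 hxy)
      have t2 := val_eq (hinj1 t1)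
      exact Subtype.ext t2
    · intro x y ex1 ex2
      have step1 := hpres2
        ⟨f1 ⟨x.1, fun h => x.2 (Set.mem_union_right _ h)⟩, fun hh => x.2 (by
          rw [show x.1 = v0 from val_eq (hinj1 hh)]
          exact Set.mem_union_left _ (by left; rfl))⟩
        ⟨f1 ⟨y.1, fun h => y.2 (Set.mem_union_right _ h)⟩, fun hh => y.2 (by
          rw [show y.1 = v0 from val_eq (hinj1 hh)]
          exact Set.mem_union_left _ (by left; rfl))⟩
        (fun h => ex1 ⟨val_eq (hinj1 h.1),
          val_eq (hinj1 h.2)⟩)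
        (fun h => ex2 ⟨val_eq (hinj1 h.1),
          val_eq (hinj1 h.2)⟩)
        (fun h => x.2 (by
          rw [show x.1 = p from val_eq (hinj1 h.1)]
          exact Set.mem_union_left _ (by right; left; rfl)))
        (fun h => x.2 (by
          rw [show x.1 = q from val_eq (hinj1 h.1)]
          exact Set.mem_union_left _ (by right; right; rfl)))
      have step2 := hpres1 ⟨x.1, fun h => x.2 (Set.mem_union_right _ h)⟩
        ⟨y.1, fun h => y.2 (Set.mem_union_right _ h)⟩
        (fun h => x.2 (by
          rw [show x.1 = p from h.1]
          exact Set.mem_union_left _ (by right; left; rfl)))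
        (fun h => x.2 (by
          rw [show x.1 = q from h.1]
          exact Set.mem_union_left _ (by right; right; rfl)))
      exact step1.trans step2
    · intro ha hc
      have hA1V1 : f1 ⟨A, hAS0⟩ ≠ f1 ⟨v0, hv0S0⟩ := hne1 _ _ hAv0
      have hC1V1 : f1 ⟨C, hCS0⟩ ≠ f1 ⟨v0, hv0S0⟩ := hne1 _ _ hCv0
      have s1 := hacc2 hA1V1 hC1V1
      have s2 := hpres1 ⟨A, hAS0⟩ ⟨C, hCS0⟩ (fun h => hAp h.1) (fun h => hAq h.1)
      exact s1.trans (by rw [s2])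
lemma sum5 (G : MG) (v a b c d e : G.V) (hab : a ≠ b) (hac : a ≠ c) (had : a ≠ d)
    (hae : a ≠ e) (hbc : b ≠ c) (hbd : b ≠ d) (hbe : b ≠ e) (hcd : c ≠ d)
    (hce : c ≠ e) (hde : d ≠ e) :
    ∑ y ∈ ({a, b, c, d, e} : Finset G.V), G.mult v y =
      G.mult v a + G.mult v b + G.mult v c + G.mult v d + G.mult v e := by
  rw [Finset.sum_insert (by simp [hab, hac, had, hae]),
    Finset.sum_insert (by simp [hbc, hbd, hbe]),
    Finset.sum_insert (by simp [hcd, hce]), Finset.sum_insert (by simp [hde]),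
    Finset.sum_singleton]
  ring

lemma pin_one {G : MG} (hreg : G.Regular 6) (v b d e : G.V)
    (hbd : b ≠ d) (hbe : b ≠ e) (hde : d ≠ e)
    (hb : 2 ≤ G.mult v b) (hd : 1 ≤ G.mult v d) (he : 1 ≤ G.mult v e)
    (hu : (∃ e', e' ≠ b ∧ e' ≠ d ∧ e' ≠ e ∧ 2 ≤ G.mult v e') ∨
      (∃ x y, x ≠ y ∧ x ≠ b ∧ x ≠ d ∧ x ≠ e ∧ y ≠ b ∧ y ≠ d ∧ y ≠ e ∧
        1 ≤ G.mult v x ∧ 1 ≤ G.mult v y)) :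
    G.mult v b = 2 := by
  rcases hu with ⟨e', h1, h2, h3, he'⟩ |
    ⟨x, y, hxy, hx1, hx2, hx3, hy1, hy2, hy3, hx, hy⟩
  · have hsum := sum4 G v b d e e' hbd hbe h1.symm hde h2.symm h3.symm
    obtain ⟨heq, -⟩ := pin_master hreg v {b, d, e, e'} (by rw [hsum]; omega)
    rw [hsum] at heq
    omega
  · have hsum := sum5 G v b d e x y hbd hbe hx1.symm hy1.symm hde hx2.symm
      hy2.symm hx3.symm hy3.symm hxy
    obtain ⟨heq, -⟩ := pin_master hreg v {b, d, e, x, y} (by rw [hsum]; omega)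
    rw [hsum] at heq
    omega

lemma addOn_transport_subtype {H H1 : MG} {S : Set H.V} {ac cc : H.V}
    (f1 : {y : H.V // y ∉ S} → H1.V) (hinj1 : Function.Injective f1)
    (hpres1 : ∀ x y : {y : H.V // y ∉ S},
      ¬(x.1 = ac ∧ y.1 = cc) → ¬(x.1 = cc ∧ y.1 = ac) →
      H1.mult (f1 x) (f1 y) = H.mult x.1 y.1)
    {w : H.V} {T : Set H.V} (hT : H.AddOnAt w T)
    (hTS : ∀ t ∈ T, t ∉ S) (hTa : ac ∉ T) (hTc : cc ∉ T) (hw : w ∉ S) :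
    ∃ T' : Set H1.V,
      H1.AddOnAt (f1 ⟨w, hw⟩) T' ∧
      ∀ z ∈ T', ∃ t, ∃ ht : t ∈ T, z = f1 ⟨t, hTS t ht⟩ := by
  set F : H.V → H1.V := fun z => if h : z ∉ S then f1 ⟨z, h⟩ else f1 ⟨w, hw⟩
    with hF
  have hFT : ∀ t (ht : t ∈ T), F t = f1 ⟨t, hTS t ht⟩ := fun t ht =>
    dif_pos (hTS t ht)
  refine ⟨F '' T, ?_, ?_⟩
  · have key := addOn_transport F hT
      (fun p hp q hq h => by
        rw [hFT p hp, hFT q hq] at h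
        exact val_eq (hinj1 h))
      (fun p hp q hq => by
        rw [hFT p hp, hFT q hq]
        exact hpres1 _ _ (fun hh => hTa (hh.1 ▸ hp)) (fun hh => hTc (hh.1 ▸ hp)))
    rw [hFT w (addOn_mem hT)] at key
    exact key
  · rintro z ⟨t, ht, rfl⟩
    exact ⟨t, ht, (hFT t ht)⟩

lemma config2 {H : MG} (hreg : H.Regular 6) (a b c d : H.V) (S : Set H.V)
    (hab : a ≠ b) (hac : a ≠ c) (had : a ≠ d) (hbc : b ≠ c) (hbd : b ≠ d)
    (hcd : c ≠ d)
    (m1 : 2 ≤ H.mult a b) (m2 : 2 ≤ H.mult b c) (m3 : 2 ≤ H.mult c d)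
    (m4 : 1 ≤ H.mult d a)
    (hS : H.AddOnAt b S) (hdisj : S ∩ {a, c, d} = ∅) :
    ∃ H', DYYEquiv H H' ∧ Config1 H' := by
  have haS : a ∉ S := fun h => by
    have hmem : a ∈ S ∩ {a, c, d} := ⟨h, by left; rfl⟩
    rw [hdisj] at hmem; exact hmem
  have hcS : c ∉ S := fun h => by
    have hmem : c ∈ S ∩ {a, c, d} := ⟨h, by right; left; rfl⟩
    rw [hdisj] at hmem; exact hmem
  have hdS : d ∉ S := fun h => by
    have hmem : d ∈ S ∩ {a, c, d} := ⟨h, by right; right; rfl⟩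
    rw [hdisj] at hmem; exact hmem
  have hpin : H.mult b a = 2 ∧ H.mult b c = 2 := by
    refine pinr hreg hac (by rw [H.symm]; exact m1) m2 ?_
    rcases addOn_units hS with ⟨e, heS, heb, he2⟩ |
      ⟨x, hx, y, hy, hxy, hxb, hyb, hx1, hy1⟩
    · exact Or.inl ⟨e, fun h => haS (h ▸ heS), fun h => hcS (h ▸ heS), he2⟩
    · exact Or.inr ⟨x, y, hxy, fun h => haS (h ▸ hx), fun h => hcS (h ▸ hx),
        fun h => haS (h ▸ hy), fun h => hcS (h ▸ hy), hx1, hy1⟩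
  obtain ⟨H1, e1, hreg1, f1, hinj1, hpres1, hacc1⟩ :=
    addLemma hreg hS a c haS hcS hac hpin.1 hpin.2
  have hne1 : ∀ (x y : {z : H.V // z ∉ S}), x.1 ≠ y.1 → f1 x ≠ f1 y :=
    fun x y h hh => h (val_eq (hinj1 hh))
  refine ⟨H1, e1, f1 ⟨c, hcS⟩, f1 ⟨d, hdS⟩, f1 ⟨a, haS⟩,
    hne1 _ _ hcd, hne1 _ _ hac.symm, hne1 _ _ had.symm, ?_, ?_, ?_⟩
  · rw [hpres1 ⟨c, hcS⟩ ⟨d, hdS⟩ (fun h => hac h.1.symm) (fun h => had h.2.symm)]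
    exact m3
  · rw [H1.symm, hacc1 haS hcS]
    omega
  · rw [hpres1 ⟨d, hdS⟩ ⟨a, haS⟩ (fun h => had h.1.symm) (fun h => hcd h.1.symm)]
    exact m4

lemma config3 {H : MG} (hreg : H.Regular 6) (v0 v1 v2 v3 v4 : H.V)
    (S T : Set H.V)
    (d1 : v0 ≠ v1) (d2 : v0 ≠ v2) (d3 : v0 ≠ v3) (d4 : v0 ≠ v4) (d5 : v1 ≠ v2)
    (d6 : v1 ≠ v3) (d7 : v1 ≠ v4) (d8 : v2 ≠ v3) (d9 : v2 ≠ v4) (d10 : v3 ≠ v4)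
    (m1 : 2 ≤ H.mult v0 v1) (m2 : 2 ≤ H.mult v1 v2) (m3 : 2 ≤ H.mult v2 v3)
    (m4 : 2 ≤ H.mult v3 v4) (m5 : 2 ≤ H.mult v4 v0)
    (hS : H.AddOnAt v0 S) (hT : H.AddOnAt v2 T)
    (hdS : S ∩ {v1, v2, v3, v4} = ∅) (hdT : T ∩ {v0, v1, v3, v4} = ∅)
    (hST : S ∩ T = ∅) :
    ∃ H', DYYEquiv H H' ∧ Config1 H' := by
  have h1S : v1 ∉ S := fun h => by
    have hmem : v1 ∈ S ∩ {v1, v2, v3, v4} := ⟨h, by left; rfl⟩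
    rw [hdS] at hmem; exact hmem
  have h2S : v2 ∉ S := fun h => by
    have hmem : v2 ∈ S ∩ {v1, v2, v3, v4} := ⟨h, by right; left; rfl⟩
    rw [hdS] at hmem; exact hmem
  have h3S : v3 ∉ S := fun h => by
    have hmem : v3 ∈ S ∩ {v1, v2, v3, v4} := ⟨h, by right; right; left; rfl⟩
    rw [hdS] at hmem; exact hmem
  have h4S : v4 ∉ S := fun h => by
    have hmem : v4 ∈ S ∩ {v1, v2, v3, v4} := ⟨h, by right; right; right; rfl⟩
    rw [hdS] at hmem; exact hmem
  have h0T : v0 ∉ T := fun h => by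
    have hmem : v0 ∈ T ∩ {v0, v1, v3, v4} := ⟨h, by left; rfl⟩
    rw [hdT] at hmem; exact hmem
  have h1T : v1 ∉ T := fun h => by
    have hmem : v1 ∈ T ∩ {v0, v1, v3, v4} := ⟨h, by right; left; rfl⟩
    rw [hdT] at hmem; exact hmem
  have h3T : v3 ∉ T := fun h => by
    have hmem : v3 ∈ T ∩ {v0, v1, v3, v4} := ⟨h, by right; right; left; rfl⟩
    rw [hdT] at hmem; exact hmem
  have h4T : v4 ∉ T := fun h => by
    have hmem : v4 ∈ T ∩ {v0, v1, v3, v4} := ⟨h, by right; right; right; rfl⟩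
    rw [hdT] at hmem; exact hmem
  have hTS : ∀ t ∈ T, t ∉ S := fun t ht hs => by
    have hmem : t ∈ S ∩ T := ⟨hs, ht⟩
    rw [hST] at hmem; exact hmem
  have hu0 : (∃ e, e ≠ v1 ∧ e ≠ v4 ∧ 2 ≤ H.mult v0 e) ∨
      (∃ x y, x ≠ y ∧ x ≠ v1 ∧ x ≠ v4 ∧ y ≠ v1 ∧ y ≠ v4 ∧
        1 ≤ H.mult v0 x ∧ 1 ≤ H.mult v0 y) := by
    rcases addOn_units hS with ⟨e, heS, he0, he2⟩ |
      ⟨x, hx, y, hy, hxy, hx0, hy0, hx1, hy1⟩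
    · exact Or.inl ⟨e, fun h => h1S (h ▸ heS), fun h => h4S (h ▸ heS), he2⟩
    · exact Or.inr ⟨x, y, hxy, fun h => h1S (h ▸ hx), fun h => h4S (h ▸ hx),
        fun h => h1S (h ▸ hy), fun h => h4S (h ▸ hy), hx1, hy1⟩
  have hpin : H.mult v0 v1 = 2 ∧ H.mult v0 v4 = 2 :=
    pinr hreg d7 m1 (by rw [H.symm]; exact m5) hu0
  obtain ⟨H1, e1, hreg1, f1, hinj1, hpres1, hacc1⟩ :=
    addLemma hreg hS v1 v4 h1S h4S d7 hpin.1 hpin.2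
  have hne1 : ∀ (x y : {z : H.V // z ∉ S}), x.1 ≠ y.1 → f1 x ≠ f1 y :=
    fun x y h hh => h (val_eq (hinj1 hh))
  obtain ⟨T', hAdd, hchar⟩ := addOn_transport_subtype f1 hinj1 hpres1 hT hTS
    h1T h4T h2S
  have hm12 : 2 ≤ H1.mult (f1 ⟨v1, h1S⟩) (f1 ⟨v2, h2S⟩) := by
    rw [hpres1 ⟨v1, h1S⟩ ⟨v2, h2S⟩ (fun h => d9 h.2) (fun h => d7 h.1)]
    exact m2
  have hm23 : 2 ≤ H1.mult (f1 ⟨v2, h2S⟩) (f1 ⟨v3, h3S⟩) := by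
    rw [hpres1 ⟨v2, h2S⟩ ⟨v3, h3S⟩ (fun h => d5 h.1.symm) (fun h => d9 h.1)]
    exact m3
  have hm34 : 2 ≤ H1.mult (f1 ⟨v3, h3S⟩) (f1 ⟨v4, h4S⟩) := by
    rw [hpres1 ⟨v3, h3S⟩ ⟨v4, h4S⟩ (fun h => d6 h.1.symm) (fun h => d10 h.1)]
    exact m4
  have hm41 : 1 ≤ H1.mult (f1 ⟨v4, h4S⟩) (f1 ⟨v1, h1S⟩) := by
    rw [H1.symm, hacc1 h1S h4S]
    omega
  have hdisj' : T' ∩ {f1 ⟨v1, h1S⟩, f1 ⟨v3, h3S⟩, f1 ⟨v4, h4S⟩} = ∅ := by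
    rw [Set.eq_empty_iff_forall_notMem]
    rintro z ⟨hz1, hz2⟩
    obtain ⟨t, ht, rfl⟩ := hchar z hz1
    rcases hz2 with h | h | h
    · have ht1 : t = v1 := val_eq (hinj1 h)
      exact h1T (ht1 ▸ ht)
    · have ht1 : t = v3 := val_eq (hinj1 h)
      exact h3T (ht1 ▸ ht)
    · have ht1 : t = v4 := val_eq (hinj1 h)
      exact h4T (ht1 ▸ ht)
  obtain ⟨H2, e2, hc⟩ := config2 hreg1 (f1 ⟨v1, h1S⟩) (f1 ⟨v2, h2S⟩)
    (f1 ⟨v3, h3S⟩) (f1 ⟨v4, h4S⟩) T'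
    (hne1 _ _ d5) (hne1 _ _ d6) (hne1 _ _ d7) (hne1 _ _ d8) (hne1 _ _ d9)
    (hne1 _ _ d10) hm12 hm23 hm34 hm41 hAdd hdisj'
  exact ⟨H2, dyy_trans e1 e2, hc⟩

lemma config4 {H : MG} (hreg : H.Regular 6) (a b c d e : H.V) (S T : Set H.V)
    (d1 : a ≠ b) (d2 : a ≠ c) (d3 : a ≠ d) (d4 : a ≠ e) (d5 : b ≠ c)
    (d6 : b ≠ d) (d7 : b ≠ e) (d8 : c ≠ d) (d9 : c ≠ e) (d10 : d ≠ e)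
    (m1 : 2 ≤ H.mult a b) (m2 : 2 ≤ H.mult b c) (m3 : 2 ≤ H.mult c d)
    (m4 : H.mult d a = 1) (m5 : 1 ≤ H.mult d e) (m6 : 1 ≤ H.mult e a)
    (hS : H.AddOnAt a S) (hT : H.AddOnAt d T)
    (hdS : S ∩ {b, c, d, e} = ∅) (hdT : T ∩ {a, b, c, e} = ∅)
    (hST : S ∩ T = ∅) :
    ∃ H', DYYEquiv H H' ∧ Config1 H' := by
  have hbS : b ∉ S := fun h => by
    have hmem : b ∈ S ∩ {b, c, d, e} := ⟨h, by left; rfl⟩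
    rw [hdS] at hmem; exact hmem
  have hcS : c ∉ S := fun h => by
    have hmem : c ∈ S ∩ {b, c, d, e} := ⟨h, by right; left; rfl⟩
    rw [hdS] at hmem; exact hmem
  have hdS' : d ∉ S := fun h => by
    have hmem : d ∈ S ∩ {b, c, d, e} := ⟨h, by right; right; left; rfl⟩
    rw [hdS] at hmem; exact hmem
  have heS : e ∉ S := fun h => by
    have hmem : e ∈ S ∩ {b, c, d, e} := ⟨h, by right; right; right; rfl⟩
    rw [hdS] at hmem; exact hmem
  have haT : a ∉ T := fun h => by
    have hmem : a ∈ T ∩ {a, b, c, e} := ⟨h, by left; rfl⟩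
    rw [hdT] at hmem; exact hmem
  have hbT : b ∉ T := fun h => by
    have hmem : b ∈ T ∩ {a, b, c, e} := ⟨h, by right; left; rfl⟩
    rw [hdT] at hmem; exact hmem
  have hcT : c ∉ T := fun h => by
    have hmem : c ∈ T ∩ {a, b, c, e} := ⟨h, by right; right; left; rfl⟩
    rw [hdT] at hmem; exact hmem
  have heT : e ∉ T := fun h => by
    have hmem : e ∈ T ∩ {a, b, c, e} := ⟨h, by right; right; right; rfl⟩
    rw [hdT] at hmem; exact hmem
  have hTS : ∀ t ∈ T, t ∉ S := fun t ht hs => by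
    have hmem : t ∈ S ∩ T := ⟨hs, ht⟩
    rw [hST] at hmem; exact hmem
  -- pin: `mult a b = 2`
  have hab2 : H.mult a b = 2 := by
    refine pin_one hreg a b d e d6 d7 d10 m1
      (by rw [H.symm]; omega) (by rw [H.symm]; exact m6) ?_
    rcases addOn_units hS with ⟨e', he'S, he'a, he'2⟩ |
      ⟨x, hx, y, hy, hxy, hxa, hya, hx1, hy1⟩
    · exact Or.inl ⟨e', fun h => hbS (h ▸ he'S), fun h => hdS' (h ▸ he'S),
        fun h => heS (h ▸ he'S), he'2⟩
    · exact Or.inr ⟨x, y, hxy, fun h => hbS (h ▸ hx), fun h => hdS' (h ▸ hx),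
        fun h => heS (h ▸ hx), fun h => hbS (h ▸ hy), fun h => hdS' (h ▸ hy),
        fun h => heS (h ▸ hy), hx1, hy1⟩
  -- pin: `mult d c = 2`
  have hdc2 : H.mult d c = 2 := by
    refine pin_one hreg d c a e d2.symm d9 d4
      (by rw [H.symm]; exact m3) (by omega) m5 ?_
    rcases addOn_units hT with ⟨e', he'T, he'd, he'2⟩ |
      ⟨x, hx, y, hy, hxy, hxd, hyd, hx1, hy1⟩
    · exact Or.inl ⟨e', fun h => hcT (h ▸ he'T), fun h => haT (h ▸ he'T),
        fun h => heT (h ▸ he'T), he'2⟩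
    · exact Or.inr ⟨x, y, hxy, fun h => hcT (h ▸ hx), fun h => haT (h ▸ hx),
        fun h => heT (h ▸ hx), fun h => hcT (h ▸ hy), fun h => haT (h ▸ hy),
        fun h => heT (h ▸ hy), hx1, hy1⟩
  -- Δ-YY on the triangle a, d, e
  have hdel : H.IsDelta a d e :=
    ⟨d3, d4, d10, show 0 < H.mult a d by rw [H.symm]; omega,
      show 0 < H.mult a e by rw [H.symm]; omega, m5⟩
  have hreg1 : (H.deltaYY a d e).Regular 6 := regular_deltaYY hreg hdel
  -- transport the add-on S into H1
  have hAddS1 : (H.deltaYY a d e).AddOnAt (some a) (some '' S) := by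
    refine addOn_transport (G' := H.deltaYY a d e) (some : H.V → (H.deltaYY a d e).V) hS (fun p _ q _ h => Option.some_injective _ h)
      (fun p hp q hq => ?_)
    rw [deltaYY_mult_ss, triCount_zero ?_, Nat.sub_zero]
    rintro (⟨h1, h2⟩ | ⟨h1, h2⟩ | ⟨h1, h2⟩ | ⟨h1, h2⟩ | ⟨h1, h2⟩ | ⟨h1, h2⟩)
    · exact hdS' (h2 ▸ hq)
    · exact hdS' (h1 ▸ hp)
    · exact heS (h2 ▸ hq)
    · exact heS (h1 ▸ hp)
    · exact hdS' (h1 ▸ hp)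
    · exact heS (h1 ▸ hp)
  have hbS1 : (some b : (H.deltaYY a d e).V) ∉ some '' S := by
    rintro ⟨t, ht, hte⟩
    exact hbS (Option.some_injective _ hte ▸ ht)
  have hnS1 : (none : (H.deltaYY a d e).V) ∉ some '' S := by
    rintro ⟨t, ht, hte⟩
    exact (nomatch hte)
  obtain ⟨H2, e2, hreg2, f2, hinj2, hpres2, hacc2⟩ :=
    addLemma hreg1 hAddS1 (some b) none hbS1 hnS1
      (fun hh => (nomatch hh))
      (by rw [deltaYY_mult_ss, triCount_zero (by
            rintro (⟨h1, h2⟩ | ⟨h1, h2⟩ | ⟨h1, h2⟩ | ⟨h1, h2⟩ | ⟨h1, h2⟩ | ⟨h1, h2⟩)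
            · exact d6 h2
            · exact d3 h1
            · exact d7 h2
            · exact d4 h1
            · exact d3 h1
            · exact d4 h1), Nat.sub_zero]
          exact hab2)
      (by rw [deltaYY_mult_sn, if_pos (Or.inl rfl)])
  -- transport the add-on T into H1, then into H2
  have hAddT1 : (H.deltaYY a d e).AddOnAt (some d) (some '' T) := by
    refine addOn_transport (G' := H.deltaYY a d e) (some : H.V → (H.deltaYY a d e).V) hT (fun p _ q _ h => Option.some_injective _ h)
      (fun p hp q hq => ?_)
    rw [deltaYY_mult_ss, triCount_zero ?_, Nat.sub_zero]
    rintro (⟨h1, h2⟩ | ⟨h1, h2⟩ | ⟨h1, h2⟩ | ⟨h1, h2⟩ | ⟨h1, h2⟩ | ⟨h1, h2⟩)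
    · exact haT (h1 ▸ hp)
    · exact haT (h2 ▸ hq)
    · exact haT (h1 ▸ hp)
    · exact heT (h1 ▸ hp)
    · exact heT (h2 ▸ hq)
    · exact heT (h1 ▸ hp)
  have hTS1 : ∀ t ∈ (some '' T : Set (H.deltaYY a d e).V), t ∉ some '' S := by
    rintro t ⟨u, hu, rfl⟩ ⟨u', hu', hue⟩
    exact hTS u hu (Option.some_injective _ hue ▸ hu')
  have hbT1 : (some b : (H.deltaYY a d e).V) ∉ some '' T := by
    rintro ⟨t, ht, hte⟩
    exact hbT (Option.some_injective _ hte ▸ ht)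
  have hnT1 : (none : (H.deltaYY a d e).V) ∉ some '' T := by
    rintro ⟨t, ht, hte⟩
    exact (nomatch hte)
  have hdS1 : (some d : (H.deltaYY a d e).V) ∉ some '' S := by
    rintro ⟨t, ht, hte⟩
    exact hdS' (Option.some_injective _ hte ▸ ht)
  obtain ⟨T2, hAdd2, hchar2⟩ := addOn_transport_subtype f2 hinj2 hpres2 hAddT1
    hTS1 hbT1 hnT1 hdS1
  have hcS1 : (some c : (H.deltaYY a d e).V) ∉ some '' S := by
    rintro ⟨t, ht, hte⟩
    exact hcS (Option.some_injective _ hte ▸ ht)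
  have hcT2 : f2 ⟨some c, hcS1⟩ ∉ T2 := by
    intro h
    obtain ⟨t, ht, hte⟩ := hchar2 _ h
    obtain ⟨u, hu, rfl⟩ := ht
    exact hcT (Option.some_injective _ (val_eq (hinj2 hte.symm)) ▸ hu)
  have hnT2 : f2 ⟨none, hnS1⟩ ∉ T2 := by
    intro h
    obtain ⟨t, ht, hte⟩ := hchar2 _ h
    obtain ⟨u, hu, rfl⟩ := ht
    exact (nomatch (val_eq (hinj2 hte.symm)))
  have hbT2 : f2 ⟨some b, hbS1⟩ ∉ T2 := by
    intro h
    obtain ⟨t, ht, hte⟩ := hchar2 _ h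
    obtain ⟨u, hu, rfl⟩ := ht
    exact hbT (Option.some_injective _ (val_eq (hinj2 hte.symm)) ▸ hu)
  obtain ⟨H3, e3, hreg3, f3, hinj3, hpres3, hacc3⟩ :=
    addLemma hreg2 hAdd2 (f2 ⟨some c, hcS1⟩) (f2 ⟨none, hnS1⟩) hcT2 hnT2
      (fun hh => (nomatch (val_eq (hinj2 hh))))
      (by rw [hpres2 ⟨some d, hdS1⟩ ⟨some c, hcS1⟩
            (fun h => (nomatch h.2)) (fun h => (nomatch h.1)),
          deltaYY_mult_ss, triCount_zero (by
            rintro (⟨h1, h2⟩ | ⟨h1, h2⟩ | ⟨h1, h2⟩ | ⟨h1, h2⟩ | ⟨h1, h2⟩ | ⟨h1, h2⟩)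
            · exact d3 h1.symm
            · exact d2 h2.symm
            · exact d3 h1.symm
            · exact d10 h1
            · exact d9 h2
            · exact d10 h1), Nat.sub_zero]
          exact hdc2)
      (by rw [hpres2 ⟨some d, hdS1⟩ ⟨none, hnS1⟩
            (fun h => d6.symm (Option.some_injective _ h.1))
            (fun h => (nomatch h.1)),
          deltaYY_mult_sn, if_pos (Or.inr (Or.inl rfl))])
  -- the final triangle
  refine ⟨H3, dyy_trans (dyy_of_delta hdel) (dyy_trans e2 e3), ?_⟩
  refine ⟨f3 ⟨f2 ⟨some b, hbS1⟩, hbT2⟩, f3 ⟨f2 ⟨some c, hcS1⟩, hcT2⟩,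
    f3 ⟨f2 ⟨none, hnS1⟩, hnT2⟩, ?_, ?_, ?_, ?_, ?_, ?_⟩
  · intro hh
    exact d5 (Option.some_injective _ (val_eq (hinj2 (val_eq (hinj3 hh)))))
  · intro hh
    exact (nomatch (val_eq (hinj2 (val_eq (hinj3 hh)))))
  · intro hh
    exact (nomatch (val_eq (hinj2 (val_eq (hinj3 hh)))))
  · rw [hpres3 ⟨f2 ⟨some b, hbS1⟩, hbT2⟩ ⟨f2 ⟨some c, hcS1⟩, hcT2⟩
        (fun h => d5 (Option.some_injective _ (val_eq (hinj2 h.1))))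
        (fun h => (nomatch (val_eq (hinj2 h.1))))]
    rw [hpres2 ⟨some b, hbS1⟩ ⟨some c, hcS1⟩
        (fun h => (nomatch h.2)) (fun h => (nomatch h.1))]
    rw [deltaYY_mult_ss, triCount_zero (by
        rintro (⟨h1, h2⟩ | ⟨h1, h2⟩ | ⟨h1, h2⟩ | ⟨h1, h2⟩ | ⟨h1, h2⟩ | ⟨h1, h2⟩)
        · exact d1 h1.symm
        · exact d6 h1
        · exact d1 h1.symm
        · exact d7 h1
        · exact d6 h1
        · exact d8 h2), Nat.sub_zero]
    exact m2
  · rw [hpres3 ⟨f2 ⟨some b, hbS1⟩, hbT2⟩ ⟨f2 ⟨none, hnS1⟩, hnT2⟩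
        (fun h => d5 (Option.some_injective _ (val_eq (hinj2 h.1))))
        (fun h => (nomatch (val_eq (hinj2 h.1))))]
    rw [hacc2 hbS1 hnS1]
    omega
  · rw [hacc3 hcT2 hnT2]
    omega

end MG
end

/-- Any 6-regular multigraph containing one of the excluded
subgraphs lies in an infinite Δ-YY equivalence class. -/
theorem stmt_9 (G : MG) (h6 : G.Regular 6) (hex : G.HasExcluded) :
    ¬ G.FiniteClass := by
  rcases hex with ⟨a, b, c, h1, h2, h3, h4, h5, hm⟩ |
    ⟨a, b, c, d, S, h1, h2, h3, h4, h5, hd6, m1, m2, m3, m4, hS, hdisj⟩ |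
    ⟨v0, v1, v2, v3, v4, S, T, d1, d2, d3, d4, d5, dd6, d7, d8, d9, d10,
      m1, m2, m3, m4, m5, hS, hT, hdS, hdT, hST⟩ |
    ⟨a, b, c, d, e, S, T, d1, d2, d3, d4, d5, dd6, d7, d8, d9, d10,
      m1, m2, m3, m4, m5, m6, hS, hT, hdS, hdT, hST⟩
  · exact MG.not_finite_of_config1 (MG.dyy_refl G) ⟨a, b, c, h1, h2, h3, h4, h5, hm⟩
  · obtain ⟨H', e', hc⟩ := MG.config2 h6 a b c d S h1 h2 h3 h4 h5 hd6 m1 m2 m3 m4 hS hdisj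
    exact MG.not_finite_of_config1 e' hc
  · obtain ⟨H', e', hc⟩ := MG.config3 h6 v0 v1 v2 v3 v4 S T d1 d2 d3 d4 d5 dd6
      d7 d8 d9 d10 m1 m2 m3 m4 m5 hS hT hdS hdT hST
    exact MG.not_finite_of_config1 e' hc
  · obtain ⟨H', e', hc⟩ := MG.config4 h6 a b c d e S T d1 d2 d3 d4 d5 dd6
      d7 d8 d9 d10 m1 m2 m3 m4 m5 m6 hS hT hdS hdT hST
    exact MG.not_finite_of_config1 e' hc
end
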